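/- arXiv:2003.08259 — 5 statements merged into one kernel-verified Lean document; each statement's English description precedes it below -/
import Mathlib

section
/- Let X be a real n×d matrix with full column rank, Q = (1/n)X^T X with λ_min(Q) ≥ c₁ > 0, and f ∈ ℝⁿ. If (1/n)·f^T(I - (1/n)X Q^{-1} X^T)f ≥ c₂ > 0, then the smallest eigenvalue of the block matrix G = [[Q, (1/n)X^T f], [(1/n)f^T X, (1/n)‖f‖₂²]] is bounded below by a positive constant depending only on c₁, c₂, and an upper bound on the entries of G. -/
open Matrix

theorem stmt4 (c₁ c₂ Mbd : ℝ) (hc₁ : 0 < c₁) (hc₂ : 0 < c₂) (hM : 0 < Mbd) :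
    ∃ c₃ : ℝ, 0 < c₃ ∧
      ∀ (n d : ℕ) (X : Matrix (Fin n) (Fin d) ℝ) (f : Fin n → ℝ)
        (Q : Matrix (Fin d) (Fin d) ℝ) (G : Matrix (Fin d ⊕ Fin 1) (Fin d ⊕ Fin 1) ℝ),
        0 < n →
        IsUnit (Xᵀ * X).det →
        Q = (1 / (n : ℝ)) • (Xᵀ * X) →
        G = Matrix.fromBlocks Q
          (Matrix.of fun i (_ : Fin 1) => (1 / (n : ℝ)) * (Xᵀ.mulVec f) i)
          (Matrix.of fun (_ : Fin 1) j => (1 / (n : ℝ)) * (Xᵀ.mulVec f) j)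
          (Matrix.of fun (_ : Fin 1) (_ : Fin 1) => (1 / (n : ℝ)) * (f ⬝ᵥ f)) →
        (∀ w : Fin d → ℝ, c₁ * (w ⬝ᵥ w) ≤ w ⬝ᵥ Q.mulVec w) →
        c₂ ≤ (1 / (n : ℝ)) * (f ⬝ᵥ ((1 - (1 / (n : ℝ)) • (X * Q⁻¹ * Xᵀ)).mulVec f)) →
        (∀ i j, |G i j| ≤ Mbd) →
        ∀ v : Fin d ⊕ Fin 1 → ℝ, c₃ * (v ⬝ᵥ v) ≤ v ⬝ᵥ G.mulVec v := by
  have hden : 0 < 1 + 2 * Mbd / c₁ := by positivity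
  refine ⟨min (c₁ / 2) (c₂ / (1 + 2 * Mbd / c₁)), lt_min (by positivity) (by positivity), ?_⟩
  intro n d X f Q G hn hdet hQ hG hQlb hSchur hGbd v
  have hn0 : (0 : ℝ) < (n : ℝ) := by exact_mod_cast hn
  -- basic objects
  set a : Fin d → ℝ := Xᵀ.mulVec f with ha
  set b : Fin d → ℝ := fun i => (1 / (n : ℝ)) * a i with hb
  set s : ℝ := (1 / (n : ℝ)) * (f ⬝ᵥ f) with hs
  set w : Fin d → ℝ := fun i => v (Sum.inl i) with hw
  set t : ℝ := v (Sum.inr 0) with ht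
  -- Q facts
  have hQsym : Qᵀ = Q := by
    rw [hQ]; simp [transpose_smul, transpose_mul]
  have hQdet : IsUnit Q.det := by
    rw [hQ, det_smul]
    exact (isUnit_iff_ne_zero.mpr (by positivity)).mul hdet
  have hQQi : Q * Q⁻¹ = 1 := Matrix.mul_nonsing_inv _ hQdet
  have hQiQ : Q⁻¹ * Q = 1 := Matrix.nonsing_inv_mul _ hQdet
  have hQisym : Q⁻¹ᵀ = Q⁻¹ := by rw [Matrix.transpose_nonsing_inv, hQsym]
  set z : Fin d → ℝ := Q⁻¹.mulVec b with hz
  have hQz : Q.mulVec z = b := by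
    rw [hz, Matrix.mulVec_mulVec, hQQi, Matrix.one_mulVec]
  set r : ℝ := b ⬝ᵥ z with hr
  -- dot product nonneg
  have hdp : ∀ (m : ℕ) (p : Fin m → ℝ), 0 ≤ p ⬝ᵥ p := fun m p =>
    Finset.sum_nonneg fun i _ => mul_self_nonneg _
  -- v as Sum.elim
  have hv : v = Sum.elim w (fun _ => t) := by
    funext i
    cases i with
    | inl i => rfl
    | inr i => simp [ht, Subsingleton.elim i 0]
  -- key expansion of the quadratic form
  have key : v ⬝ᵥ G.mulVec v = w ⬝ᵥ Q.mulVec w + 2 * t * (b ⬝ᵥ w) + t ^ 2 * s := by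
    set τ : Fin 1 → ℝ := fun _ => t with hτ
    set B : Matrix (Fin d) (Fin 1) ℝ := Matrix.of fun i (_ : Fin 1) => (1 / (n : ℝ)) * a i
    set C : Matrix (Fin 1) (Fin d) ℝ := Matrix.of fun (_ : Fin 1) j => (1 / (n : ℝ)) * a j
    set D : Matrix (Fin 1) (Fin 1) ℝ := Matrix.of fun (_ : Fin 1) (_ : Fin 1) => s
    have hvv : v = Sum.elim w τ := hv
    have hBτ : B.mulVec τ = t • b := by
      funext i
      simp [Matrix.mulVec, dotProduct, Fin.sum_univ_one, hb, B]
      ring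
    have hCw : C.mulVec w = fun _ => b ⬝ᵥ w := by
      funext i
      simp [Matrix.mulVec, dotProduct, hb, C]
    have hDτ : D.mulVec τ = fun _ => s * t := by
      funext i
      simp [Matrix.mulVec, dotProduct, Fin.sum_univ_one, D, hτ]
    have hG' : G = Matrix.fromBlocks Q B C D := hG
    rw [hvv, hG', fromBlocks_mulVec, Sum.elim_comp_inl, Sum.elim_comp_inr,
      sumElim_dotProduct_sumElim, dotProduct_add, dotProduct_add, hBτ, hCw, hDτ,
      dotProduct_smul]
    have h1 : τ ⬝ᵥ (fun _ => b ⬝ᵥ w) = t * (b ⬝ᵥ w) := by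
      simp [dotProduct, Fin.sum_univ_one, hτ]
    have h2 : τ ⬝ᵥ (fun _ => s * t) = t * (s * t) := by
      simp [dotProduct, Fin.sum_univ_one, hτ]
    rw [h1, h2, dotProduct_comm w b, smul_eq_mul]
    ring
  -- Schur complement identity
  set u : Fin d → ℝ := w + t • z with hu
  have hzQ : z ᵥ* Q = b := by rw [← hQsym, Matrix.vecMul_transpose, hQz]
  have huQu : u ⬝ᵥ Q.mulVec u = w ⬝ᵥ Q.mulVec w + 2 * t * (b ⬝ᵥ w) + t ^ 2 * r := by
    rw [hu, Matrix.mulVec_add, Matrix.mulVec_smul, hQz, add_dotProduct,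
      smul_dotProduct, dotProduct_add, dotProduct_add,
      dotProduct_smul, Matrix.dotProduct_mulVec z Q, hzQ,
      dotProduct_smul, dotProduct_comm w b, dotProduct_comm z b] at *
    rw [hr, dotProduct_comm b z]
    simp only [smul_eq_mul]
    ring
  -- quadratic form equals uᵀQu + t²(s - r)
  have hqf : v ⬝ᵥ G.mulVec v = u ⬝ᵥ Q.mulVec u + t ^ 2 * (s - r) := by
    rw [key, huQu]; ring
  -- Schur complement lower bound : c₂ ≤ s - r
  have hfM : f ⬝ᵥ (X * Q⁻¹ * Xᵀ).mulVec f = a ⬝ᵥ Q⁻¹.mulVec a := by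
    rw [Matrix.dotProduct_mulVec, ← Matrix.vecMul_vecMul, ← Matrix.vecMul_vecMul]
    have h2 : f ᵥ* X = a := by rw [ha, Matrix.mulVec_transpose]
    have h1 : a ᵥ* Q⁻¹ = Q⁻¹ *ᵥ a := by
      conv_lhs => rw [← hQisym]
      rw [Matrix.vecMul_transpose]
    have h3 : (Q⁻¹ *ᵥ a) ᵥ* Xᵀ ⬝ᵥ f = (Q⁻¹ *ᵥ a) ⬝ᵥ a := by
      rw [← Matrix.dotProduct_mulVec, ← ha]
    rw [h2, h1, h3, dotProduct_comm]
  have hra : r = (1 / (n : ℝ)) * ((1 / (n : ℝ)) * (a ⬝ᵥ Q⁻¹.mulVec a)) := by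
    rw [hr, hz]
    have : Q⁻¹.mulVec b = (1 / (n : ℝ)) • Q⁻¹.mulVec a := by
      have hba : b = (1 / (n : ℝ)) • a := by funext i; simp [hb]
      rw [hba, Matrix.mulVec_smul]
    rw [this, dotProduct_smul]
    have hba : b = (1 / (n : ℝ)) • a := by funext i; simp [hb]
    rw [hba, smul_dotProduct]
    simp only [smul_eq_mul]
  have hsr : c₂ ≤ s - r := by
    have hexp : (1 / (n : ℝ)) * (f ⬝ᵥ ((1 - (1 / (n : ℝ)) • (X * Q⁻¹ * Xᵀ)).mulVec f)) = s - r := by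
      rw [Matrix.sub_mulVec, Matrix.one_mulVec, dotProduct_sub, Matrix.smul_mulVec,
        dotProduct_smul, hfM, hra, hs]
      simp only [smul_eq_mul]; ring
    linarith [hSchur, hexp ▸ hSchur]
  -- bounds on r, s, z
  have hs_nonneg : 0 ≤ s := by
    rw [hs]; exact mul_nonneg (by positivity) (hdp n f)
  have hs_le : s ≤ Mbd := by
    have := hGbd (Sum.inr 0) (Sum.inr 0)
    rw [hG] at this
    simp only [fromBlocks_apply₂₂, Matrix.of_apply] at this
    calc s ≤ |s| := le_abs_self s
    _ ≤ Mbd := by rw [hs]; exact this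
  have hr_eq : r = z ⬝ᵥ Q.mulVec z := by
    rw [hr, ← hQz, dotProduct_comm]
  have hz_bd : c₁ * (z ⬝ᵥ z) ≤ Mbd := by
    have h1 : c₁ * (z ⬝ᵥ z) ≤ r := hr_eq ▸ hQlb z
    have h2 : r ≤ s := by linarith
    linarith
  have hzz : 0 ≤ z ⬝ᵥ z := hdp d z
  clear_value a b s w t z r u
  -- w = u - t • z  and cauchy-schwarz-ish bound
  have expand : ∀ (p q : Fin d → ℝ) (c : ℝ),
      (p + c • q) ⬝ᵥ (p + c • q) = p ⬝ᵥ p + 2 * c * (p ⬝ᵥ q) + c ^ 2 * (q ⬝ᵥ q) := by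
    intro p q c
    simp only [add_dotProduct, dotProduct_add, smul_dotProduct,
      dotProduct_smul, smul_eq_mul, dotProduct_comm q p]
    ring
  have hww : w ⬝ᵥ w ≤ 2 * (u ⬝ᵥ u) + 2 * t ^ 2 * (z ⬝ᵥ z) := by
    have hplus : (0:ℝ) ≤ (u + t • z) ⬝ᵥ (u + t • z) := hdp d _
    have e1 := expand u z t
    have e2 : w ⬝ᵥ w = u ⬝ᵥ u + 2 * (-t) * (u ⬝ᵥ z) + t ^ 2 * (z ⬝ᵥ z) := by
      have hwu : w = u + (-t) • z := by rw [hu, neg_smul]; abel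
      rw [hwu, expand u z (-t)]
      ring_nf
    linarith [hplus, e1, e2]
  have hvv2 : v ⬝ᵥ v = w ⬝ᵥ w + t ^ 2 := by
    rw [hv, sumElim_dotProduct_sumElim]
    simp [dotProduct, Fin.sum_univ_one]
    ring
  -- put it together
  have huu : 0 ≤ u ⬝ᵥ u := hdp d u
  have hQu : c₁ * (u ⬝ᵥ u) ≤ u ⬝ᵥ Q.mulVec u := hQlb u
  have ht2 : (0:ℝ) ≤ t ^ 2 := sq_nonneg t
  set c₃ := min (c₁ / 2) (c₂ / (1 + 2 * Mbd / c₁)) with hc₃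
  have hc₃1 : c₃ ≤ c₁ / 2 := min_le_left _ _
  have hc₃2 : c₃ ≤ c₂ / (1 + 2 * Mbd / c₁) := min_le_right _ _
  have hc₃pos : 0 < c₃ := lt_min (by positivity) (by positivity)
  have hkey2 : c₃ * (1 + 2 * (z ⬝ᵥ z)) ≤ c₂ := by
    have h1 : 1 + 2 * (z ⬝ᵥ z) ≤ 1 + 2 * Mbd / c₁ := by
      have h0 : z ⬝ᵥ z ≤ Mbd / c₁ := by
        rw [le_div_iff₀ hc₁]; linarith [hz_bd]
      have h2 : 2 * Mbd / c₁ = 2 * (Mbd / c₁) := by ring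
      linarith
    calc c₃ * (1 + 2 * (z ⬝ᵥ z)) ≤ c₃ * (1 + 2 * Mbd / c₁) :=
          mul_le_mul_of_nonneg_left h1 hc₃pos.le
    _ ≤ (c₂ / (1 + 2 * Mbd / c₁)) * (1 + 2 * Mbd / c₁) :=
          mul_le_mul_of_nonneg_right hc₃2 hden.le
    _ = c₂ := div_mul_cancel₀ _ hden.ne'
  rw [hqf, hvv2]
  have p1 : c₃ * (w ⬝ᵥ w + t ^ 2) ≤ c₃ * (2 * (u ⬝ᵥ u) + 2 * t ^ 2 * (z ⬝ᵥ z) + t ^ 2) :=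
    mul_le_mul_of_nonneg_left (by linarith [hww]) hc₃pos.le
  have p2 : c₃ * (2 * (u ⬝ᵥ u)) ≤ c₁ * (u ⬝ᵥ u) := by
    have h2 : c₃ * (2 * (u ⬝ᵥ u)) = (2 * c₃) * (u ⬝ᵥ u) := by ring
    rw [h2]
    exact mul_le_mul_of_nonneg_right (by linarith) huu
  have p3 : t ^ 2 * (c₃ * (1 + 2 * (z ⬝ᵥ z))) ≤ t ^ 2 * c₂ :=
    mul_le_mul_of_nonneg_left hkey2 ht2
  have p4 : t ^ 2 * c₂ ≤ t ^ 2 * (s - r) := mul_le_mul_of_nonneg_left hsr ht2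
  linarith [p1, p2, p3, p4, hQu]
end

section
/- Let L: ℝ^{d+1} → ℝ be a concave, twice continuously differentiable function, let (θ₀,β₀) be an interior point of a convex compact set 𝔹 ⊆ ℝ^{d+1}, and let (θ̂,β̂) be a global maximizer of L. Define (θ_t,β_t) = (1-t)(θ₀,β₀) + t(θ̂,β̂) and let D ∈ [0,1] be the largest value such that (θ_D,β_D) ∈ 𝔹. Then ‖∇L(θ₀,β₀)‖₂ ≥ D · min_{(θ,β)∈𝔹} λ_min(-H_{(θ,β)}) · ‖(θ₀-θ̂, β₀-β̂)‖₂, where H denotes the Hessian of L. -/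
theorem stmt8 {d : ℕ} (L : EuclideanSpace ℝ (Fin (d + 1)) → ℝ)
    (𝔹 : Set (EuclideanSpace ℝ (Fin (d + 1))))
    (hconc : ConcaveOn ℝ Set.univ L) (hC2 : ContDiff ℝ 2 L)
    (hconv : Convex ℝ 𝔹) (hcomp : IsCompact 𝔹)
    (p₀ phat : EuclideanSpace ℝ (Fin (d + 1)))
    (hint : p₀ ∈ interior 𝔹)
    (hmax : ∀ q, L q ≤ L phat)
    (c : ℝ)
    (hc : IsLeast {t : ℝ | ∃ p ∈ 𝔹, ∃ v : EuclideanSpace ℝ (Fin (d + 1)), ‖v‖ = 1 ∧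
        t = -(deriv (fun s : ℝ => deriv (fun u : ℝ => L (p + u • v)) s) 0)} c)
    (D : ℝ)
    (hD : IsGreatest {t ∈ Set.Icc (0 : ℝ) 1 | p₀ + t • (phat - p₀) ∈ 𝔹} D) :
    ‖gradient L p₀‖ ≥ D * c * ‖p₀ - phat‖ := by
  set v : EuclideanSpace ℝ (Fin (d + 1)) := phat - p₀ with hv
  have hdiffL : Differentiable ℝ L := hC2.differentiable two_ne_zero
  have hC1f : ContDiff ℝ 1 (fderiv ℝ L) := hC2.fderiv_right (le_refl 2)
  have hdifff : Differentiable ℝ (fderiv ℝ L) := hC1f.differentiable one_ne_zero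
  set B : EuclideanSpace ℝ (Fin (d + 1)) →
      EuclideanSpace ℝ (Fin (d + 1)) →L[ℝ] EuclideanSpace ℝ (Fin (d + 1)) →L[ℝ] ℝ :=
    fun x => fderiv ℝ (fderiv ℝ L) x with hB
  -- derivative of the line map
  have hline : ∀ (p w : EuclideanSpace ℝ (Fin (d + 1))) (t : ℝ),
      HasDerivAt (fun s : ℝ => p + s • w) w t := by
    intro p w t
    simpa using ((hasDerivAt_id t).smul_const w).const_add p
  -- first directional derivative
  have hd1 : ∀ (p w : EuclideanSpace ℝ (Fin (d + 1))) (s : ℝ),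
      HasDerivAt (fun u : ℝ => L (p + u • w)) (fderiv ℝ L (p + s • w) w) s := by
    intro p w s
    exact (hdiffL _).hasFDerivAt.comp_hasDerivAt s (hline p w s)
  -- derivative of s ↦ fderiv L (p + s•w) w
  have hd2 : ∀ (p w : EuclideanSpace ℝ (Fin (d + 1))) (s : ℝ),
      HasDerivAt (fun s' : ℝ => fderiv ℝ L (p + s' • w) w) (B (p + s • w) w w) s := by
    intro p w s
    have h2 : HasDerivAt (fun s' : ℝ => fderiv ℝ L (p + s' • w)) (B (p + s • w) w) s :=
      (hdifff _).hasFDerivAt.comp_hasDerivAt s (hline p w s)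
    have h3 := h2.clm_apply (hasDerivAt_const s w)
    simpa using h3
  -- second directional derivative
  have hd2' : ∀ (p w : EuclideanSpace ℝ (Fin (d + 1))) (s : ℝ),
      HasDerivAt (fun s' : ℝ => deriv (fun u : ℝ => L (p + u • w)) s') (B (p + s • w) w w) s := by
    intro p w s
    have h1 : (fun s' : ℝ => deriv (fun u : ℝ => L (p + u • w)) s')
        = fun s' : ℝ => fderiv ℝ L (p + s' • w) w := funext fun s' => (hd1 p w s').deriv
    rw [h1]; exact hd2 p w s
  -- bound on the bilinear form on 𝔹
  have hBle : ∀ p ∈ 𝔹, ∀ w : EuclideanSpace ℝ (Fin (d + 1)), B p w w ≤ -c * ‖w‖ ^ 2 := by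
    intro p hp w
    by_cases hw : w = 0
    · simp [hw]
    · have hwn : (0 : ℝ) < ‖w‖ := norm_pos_iff.mpr hw
      set u' : EuclideanSpace ℝ (Fin (d + 1)) := ‖w‖⁻¹ • w with hu'
      have hu'n : ‖u'‖ = 1 := by
        rw [hu', norm_smul, norm_inv, norm_norm, inv_mul_cancel₀ hwn.ne']
      have hmem : -(deriv (fun s : ℝ => deriv (fun u : ℝ => L (p + u • u')) s) 0)
          ∈ {t : ℝ | ∃ p ∈ 𝔹, ∃ v : EuclideanSpace ℝ (Fin (d + 1)), ‖v‖ = 1 ∧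
            t = -(deriv (fun s : ℝ => deriv (fun u : ℝ => L (p + u • v)) s) 0)} :=
        ⟨p, hp, u', hu'n, rfl⟩
      have hle := hc.2 hmem
      have hderiv : deriv (fun s : ℝ => deriv (fun u : ℝ => L (p + u • u')) s) 0
          = B p u' u' := by
        have := (hd2' p u' 0).deriv
        simpa using this
      rw [hderiv] at hle
      have hBu : B p u' u' ≤ -c := by linarith
      have hwrep : w = ‖w‖ • u' := by
        rw [hu', smul_smul, mul_inv_cancel₀ hwn.ne', one_smul]
      calc B p w w = ‖w‖ * (‖w‖ * B p u' u') := by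
            conv_lhs => rw [hwrep]
            simp only [map_smul, ContinuousLinearMap.smul_apply, smul_eq_mul]
        _ ≤ ‖w‖ * (‖w‖ * -c) := by
            apply mul_le_mul_of_nonneg_left _ hwn.le
            exact mul_le_mul_of_nonneg_left hBu hwn.le
        _ = -c * ‖w‖ ^ 2 := by ring
  -- the directional derivative function along the segment
  set g : ℝ → ℝ := fun t => fderiv ℝ L (p₀ + t • v) v with hg
  have hg' : ∀ t : ℝ, HasDerivAt g (B (p₀ + t • v) v v) t := fun t => hd2 p₀ v t
  -- membership of the segment in 𝔹
  have hD0 : 0 ≤ D := hD.1.1.1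
  have hD1 : D ≤ 1 := hD.1.1.2
  have hp₀B : p₀ ∈ 𝔹 := interior_subset hint
  have hpD : p₀ + D • v ∈ 𝔹 := hD.1.2
  have hmem : ∀ t ∈ Set.Icc (0 : ℝ) D, p₀ + t • v ∈ 𝔹 := by
    intro t ht
    rcases eq_or_lt_of_le hD0 with hDeq | hDpos
    · have : t = 0 := le_antisymm (by simpa [← hDeq] using ht.2) ht.1
      simpa [this] using hp₀B
    · have h1 : t / D ∈ Set.Icc (0 : ℝ) 1 :=
        ⟨div_nonneg ht.1 hD0, (div_le_one hDpos).mpr ht.2⟩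
      have := hconv.add_smul_sub_mem hp₀B hpD h1
      have heq : p₀ + (t / D) • (p₀ + D • v - p₀) = p₀ + t • v := by
        rw [add_sub_cancel_left, smul_smul, div_mul_cancel₀ _ hDpos.ne']
      rwa [heq] at this
  -- the decrease estimate : g D + c‖v‖²·D ≤ g 0
  have hdec : g D + c * ‖v‖ ^ 2 * D ≤ g 0 := by
    set F : ℝ → ℝ := fun t => g t + c * ‖v‖ ^ 2 * t with hF
    have hF' : ∀ t : ℝ, HasDerivAt F (B (p₀ + t • v) v v + c * ‖v‖ ^ 2) t := by
      intro t
      have h2 : HasDerivAt (fun t : ℝ => c * ‖v‖ ^ 2 * t) (c * ‖v‖ ^ 2) t := by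
        simpa using (hasDerivAt_id t).const_mul (c * ‖v‖ ^ 2)
      exact (hg' t).add h2
    have hanti : AntitoneOn F (Set.Icc 0 D) := by
      apply antitoneOn_of_deriv_nonpos (convex_Icc 0 D)
      · exact fun t _ => ((hF' t).differentiableAt).continuousAt.continuousWithinAt
      · exact fun t _ => ((hF' t).differentiableAt).differentiableWithinAt
      · intro t ht
        rw [interior_Icc] at ht
        rw [(hF' t).deriv]
        have := hBle _ (hmem t ⟨ht.1.le, ht.2.le⟩) v
        linarith
    have := hanti (Set.left_mem_Icc.mpr hD0) (Set.right_mem_Icc.mpr hD0) hD0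
    simp only [hF] at this
    linarith
  -- h is concave and maximized at 1, hence nondecreasing on (-∞, 1]
  set h : ℝ → ℝ := fun t => L (p₀ + t • v) with hh
  have hhconc : ConcaveOn ℝ Set.univ h := by
    have := hconc.comp_affineMap (AffineMap.lineMap p₀ phat)
    have heq : (L ∘ (AffineMap.lineMap p₀ phat)) = h := by
      funext t
      simp only [Function.comp_apply, AffineMap.lineMap_apply, hh, hv,
        vsub_eq_sub, vadd_eq_add]
      rw [add_comm]
    rw [heq] at this
    simpa using this
  have hh1 : ∀ t, h t ≤ h 1 := by
    intro t
    have h1eq : p₀ + (1 : ℝ) • v = phat := by rw [one_smul, hv]; abel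
    rw [hh]; simp only [h1eq]; exact hmax _
  have hhmono : ∀ x y : ℝ, x ≤ y → y ≤ 1 → h x ≤ h y := by
    intro x y hxy hy1
    rcases eq_or_lt_of_le hxy with rfl | hlt
    · exact le_rfl
    · have hx1 : x < 1 := lt_of_lt_of_le hlt hy1
      set a : ℝ := (1 - y) / (1 - x) with ha
      set b : ℝ := (y - x) / (1 - x) with hb
      have hden : (0 : ℝ) < 1 - x := by linarith
      have ha0 : 0 ≤ a := div_nonneg (by linarith) hden.le
      have hb0 : 0 ≤ b := div_nonneg (by linarith) hden.le
      have hab : a + b = 1 := by rw [ha, hb, ← add_div]; field_simp; ring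
      have hcomb := hhconc.2 (Set.mem_univ x) (Set.mem_univ (1 : ℝ)) ha0 hb0 hab
      have hxy1 : a • x + b • (1 : ℝ) = y := by
        rw [smul_eq_mul, smul_eq_mul, ha, hb]; field_simp; ring
      rw [hxy1] at hcomb
      have h1x := hh1 x
      calc h x = a * h x + b * h x := by rw [← add_mul, hab, one_mul]
        _ ≤ a * h x + b * h 1 := by
            exact add_le_add_right (mul_le_mul_of_nonneg_left h1x hb0) _
        _ ≤ h y := hcomb
  -- g D ≥ 0
  have hgD : 0 ≤ g D := by
    have hhd : ∀ t : ℝ, HasDerivAt h (g t) t := fun t => hd1 p₀ v t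
    rcases eq_or_lt_of_le hD1 with hDeq | hDlt
    · have hlocmax : IsLocalMax h 1 := Filter.Eventually.of_forall hh1
      have := hlocmax.deriv_eq_zero
      rw [(hhd 1).deriv] at this
      rw [hDeq, this]
    · have htend := hasDerivAt_iff_tendsto_slope.mp (hhd D)
      have hle : (nhdsWithin D (Set.Ioi D)) ≤ nhdsWithin D {D}ᶜ :=
        nhdsWithin_mono D fun x hx => ne_of_gt hx
      refine ge_of_tendsto (htend.mono_left hle) ?_
      filter_upwards [Ioo_mem_nhdsGT_of_mem (Set.mem_Ico.mpr ⟨le_refl D, hDlt⟩)] with x hx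
      rw [slope_def_field]
      exact div_nonneg (sub_nonneg.mpr (hhmono D x hx.1.le hx.2.le))
        (sub_nonneg.mpr hx.1.le)
  -- relate g 0 to the gradient
  have hg0 : g 0 ≤ ‖gradient L p₀‖ * ‖v‖ := by
    have hgrad : HasGradientAt L (gradient L p₀) p₀ := (hdiffL p₀).hasGradientAt
    have hfd : HasFDerivAt L
        ((InnerProductSpace.toDual ℝ (EuclideanSpace ℝ (Fin (d + 1)))) (gradient L p₀)) p₀ :=
      hasGradientAt_iff_hasFDerivAt.mp hgrad
    have hfde : fderiv ℝ L p₀ =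
        (InnerProductSpace.toDual ℝ (EuclideanSpace ℝ (Fin (d + 1)))) (gradient L p₀) :=
      hfd.fderiv
    have hg0eq : g 0 = inner ℝ (gradient L p₀) v := by
      rw [hg]; simp only [zero_smul, add_zero, hfde, InnerProductSpace.toDual_apply_apply]
    rw [hg0eq]
    exact real_inner_le_norm _ _
  -- conclude
  have hnorm : ‖p₀ - phat‖ = ‖v‖ := by rw [hv, norm_sub_rev]
  rw [hnorm, ge_iff_le]
  by_cases hv0 : ‖v‖ = 0
  · rw [hv0]; simp [norm_nonneg]
  · have hvpos : (0 : ℝ) < ‖v‖ := lt_of_le_of_ne (norm_nonneg _) (Ne.symm hv0)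
    have key : c * ‖v‖ ^ 2 * D ≤ ‖gradient L p₀‖ * ‖v‖ := by linarith
    refine le_of_mul_le_mul_right ?_ hvpos
    calc D * c * ‖v‖ * ‖v‖ = c * ‖v‖ ^ 2 * D := by ring
      _ ≤ ‖gradient L p₀‖ * ‖v‖ := key
end

section
/- Let y be a random vector in {-1,+1}ⁿ distributed according to the Ising-type model Pr[y = σ] ∝ exp(β₀ f(σ) + Σ_v (θ₀^T x_v)σ_v), where f(σ) = Σ_e w_e σ_e is a multilinear polynomial of degree at most m with Σ_{e: i∈e}|w_e| ≤ 1 for all i and |β₀| ≤ B. Define Q(y) = Σᵢ (yᵢ - tanh(β₀ fᵢ(y₋ᵢ) + θ₀^T xᵢ)) fᵢ(y₋ᵢ), where fᵢ = ∂f/∂yᵢ. Then E[Q(y)²] ≤ (12 + 4B)(m-1)·n. -/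
open Matrix

noncomputable section

/-- The spin value of a Boolean configuration coordinate. -/
def sgn (b : Bool) : ℝ := if b then 1 else -1

/-- The ±1 configuration associated to a Boolean configuration. -/
def conf {n : ℕ} (s : Fin n → Bool) : Fin n → ℝ := fun i => sgn (s i)

/-- The multilinear polynomial `f(σ) = Σ_e w_e Π_{v ∈ e} σ_v` of a weighted hypergraph. -/
def fpoly {n : ℕ} (w : Finset (Fin n) → ℝ) (σ : Fin n → ℝ) : ℝ :=
  ∑ e : Finset (Fin n), w e * ∏ v ∈ e, σ v

/-- The partial derivative `f_i = ∂f/∂y_i`. -/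
def fder {n : ℕ} (w : Finset (Fin n) → ℝ) (i : Fin n) (σ : Fin n → ℝ) : ℝ :=
  ∑ e ∈ Finset.univ.filter (fun e : Finset (Fin n) => i ∈ e), w e * ∏ v ∈ e.erase i, σ v

/-- The (log-)weight `β f(σ) + Σ_v (θᵀ x_v) σ_v` of a configuration. -/
def ham {n d : ℕ} (w : Finset (Fin n) → ℝ) (x : Fin n → Fin d → ℝ)
    (θ : Fin d → ℝ) (β : ℝ) (s : Fin n → Bool) : ℝ :=
  β * fpoly w (conf s) + ∑ v, (θ ⬝ᵥ x v) * conf s v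

/-- Expectation of `g` under the Ising-type model `Pr[y = σ] ∝ exp(β f(σ) + Σ_v (θᵀx_v)σ_v)`. -/
def expec {n d : ℕ} (w : Finset (Fin n) → ℝ) (x : Fin n → Fin d → ℝ)
    (θ : Fin d → ℝ) (β : ℝ) (g : (Fin n → Bool) → ℝ) : ℝ :=
  (∑ s : Fin n → Bool, g s * Real.exp (ham w x θ β s)) /
    (∑ s : Fin n → Bool, Real.exp (ham w x θ β s))

namespace Stmt12Aux

lemma abs_tanh_le_one (x : ℝ) : |Real.tanh x| ≤ 1 := by
  rw [Real.tanh_eq_sinh_div_cosh, abs_div, abs_of_pos (Real.cosh_pos x),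
    div_le_one (Real.cosh_pos x), Real.abs_sinh, ← Real.cosh_abs]
  exact (Real.sinh_lt_cosh _).le

lemma hasDerivAt_tanh (x : ℝ) : HasDerivAt Real.tanh (1 / Real.cosh x ^ 2) x := by
  have h := (Real.hasDerivAt_sinh x).div (Real.hasDerivAt_cosh x)
    (ne_of_gt (Real.cosh_pos x))
  have he : Real.tanh = fun y => Real.sinh y / Real.cosh y :=
    funext fun y => Real.tanh_eq_sinh_div_cosh y
  rw [he]
  refine h.congr_deriv ?_
  have h2 := Real.cosh_sq_sub_sinh_sq x
  have h3 := (Real.cosh_pos x).ne'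
  field_simp
  nlinarith

lemma tanh_lipschitz (a b : ℝ) : |Real.tanh a - Real.tanh b| ≤ |a - b| := by
  have hl : LipschitzWith 1 Real.tanh := by
    apply lipschitzWith_of_nnnorm_deriv_le (fun x => (hasDerivAt_tanh x).differentiableAt)
    intro x
    rw [(hasDerivAt_tanh x).deriv, ← NNReal.coe_le_coe, coe_nnnorm, Real.norm_eq_abs]
    have h1 := Real.one_le_cosh x
    rw [abs_of_pos (by positivity), NNReal.coe_one, div_le_one (by positivity)]
    nlinarith
  have := hl.dist_le_mul a b
  simpa [Real.dist_eq] using this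

lemma pair_zero (a R : ℝ) {y : ℝ} (hy : y = 1 ∨ y = -1) :
    (y - Real.tanh a) * Real.exp (a * y + R) +
      (-y - Real.tanh a) * Real.exp (a * -y + R) = 0 := by
  have hc := Real.cosh_pos a
  have h1 : Real.exp (-a) = (Real.exp a)⁻¹ := Real.exp_neg a
  have h2 : Real.exp a > 0 := Real.exp_pos a
  rw [Real.tanh_eq_sinh_div_cosh, Real.sinh_eq, Real.cosh_eq] at *
  rcases hy with rfl | rfl <;>
  · simp only [mul_one, mul_neg_one, mul_neg, neg_neg] at *
    rw [Real.exp_add, Real.exp_add] at *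
    field_simp at *
    ring

variable {n d : ℕ}

lemma conf_cases (s : Fin n → Bool) (i : Fin n) : conf s i = 1 ∨ conf s i = -1 := by
  cases h : s i <;> simp [conf, sgn, h]

lemma abs_conf (s : Fin n → Bool) (i : Fin n) : |conf s i| = 1 := by
  rcases conf_cases s i with h | h <;> rw [h] <;> norm_num

lemma abs_prod_conf (s : Fin n → Bool) (e : Finset (Fin n)) : |∏ v ∈ e, conf s v| = 1 := by
  rw [Finset.abs_prod]
  exact Finset.prod_eq_one fun v _ => abs_conf s v

lemma abs_fder_le {w : Finset (Fin n) → ℝ}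
    (hdeg : ∀ i : Fin n,
      ∑ e ∈ Finset.univ.filter (fun e : Finset (Fin n) => i ∈ e), |w e| ≤ 1)
    (i : Fin n) (s : Fin n → Bool) : |fder w i (conf s)| ≤ 1 := by
  calc |fder w i (conf s)| ≤ ∑ e ∈ Finset.univ.filter (fun e : Finset (Fin n) => i ∈ e),
        |w e * ∏ v ∈ e.erase i, conf s v| := Finset.abs_sum_le_sum_abs _ _
    _ = ∑ e ∈ Finset.univ.filter (fun e : Finset (Fin n) => i ∈ e), |w e| := by
        refine Finset.sum_congr rfl fun e _ => ?_
        rw [abs_mul, abs_prod_conf, mul_one]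
    _ ≤ 1 := hdeg i

lemma conf_update_ne (s : Fin n → Bool) (i j : Fin n) (b : Bool) (h : j ≠ i) :
    conf (Function.update s i b) j = conf s j := by
  simp [conf, Function.update_of_ne h]

lemma prod_conf_update (s : Fin n → Bool) (i : Fin n) (b : Bool) (e : Finset (Fin n))
    (h : i ∉ e) :
    ∏ v ∈ e, conf (Function.update s i b) v = ∏ v ∈ e, conf s v :=
  Finset.prod_congr rfl fun v hv => conf_update_ne s i v b (fun hvi => h (hvi ▸ hv))

lemma fder_update (w : Finset (Fin n) → ℝ) (i : Fin n) (s : Fin n → Bool) (b : Bool) :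
    fder w i (conf (Function.update s i b)) = fder w i (conf s) := by
  refine Finset.sum_congr rfl fun e _ => ?_
  rw [prod_conf_update s i b _ (Finset.notMem_erase i e)]

/-- The part of the Hamiltonian not involving coordinate `i`. -/
def rest (w : Finset (Fin n) → ℝ) (x : Fin n → Fin d → ℝ) (θ : Fin d → ℝ) (β : ℝ)
    (i : Fin n) (s : Fin n → Bool) : ℝ :=
  β * (∑ e ∈ Finset.univ.filter (fun e : Finset (Fin n) => i ∉ e), w e * ∏ v ∈ e, conf s v)
    + ∑ v ∈ Finset.univ.erase i, (θ ⬝ᵥ x v) * conf s v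

lemma rest_update (w : Finset (Fin n) → ℝ) (x : Fin n → Fin d → ℝ) (θ : Fin d → ℝ) (β : ℝ)
    (i : Fin n) (s : Fin n → Bool) (b : Bool) :
    rest w x θ β i (Function.update s i b) = rest w x θ β i s := by
  unfold rest
  congr 1
  · congr 1
    refine Finset.sum_congr rfl fun e he => ?_
    rw [prod_conf_update s i b e (by simpa using (Finset.mem_filter.mp he).2)]
  · refine Finset.sum_congr rfl fun v hv => ?_
    rw [conf_update_ne s i v b (Finset.ne_of_mem_erase hv)]

lemma ham_decomp (w : Finset (Fin n) → ℝ) (x : Fin n → Fin d → ℝ) (θ : Fin d → ℝ) (β : ℝ)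
    (i : Fin n) (s : Fin n → Bool) :
    ham w x θ β s
      = (β * fder w i (conf s) + θ ⬝ᵥ x i) * conf s i + rest w x θ β i s := by
  unfold ham fpoly rest
  rw [← Finset.sum_filter_add_sum_filter_not Finset.univ
    (fun e : Finset (Fin n) => i ∈ e) (fun e => w e * ∏ v ∈ e, conf s v)]
  rw [← Finset.sum_erase_add Finset.univ (fun v => (θ ⬝ᵥ x v) * conf s v) (Finset.mem_univ i)]
  have h1 : ∑ e ∈ Finset.univ.filter (fun e : Finset (Fin n) => i ∈ e),
      w e * ∏ v ∈ e, conf s v = fder w i (conf s) * conf s i := by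
    rw [fder, Finset.sum_mul]
    refine Finset.sum_congr rfl fun e he => ?_
    rw [← Finset.mul_prod_erase e _ (Finset.mem_filter.mp he).2]
    ring
  rw [h1]
  ring

lemma key_zero (w : Finset (Fin n) → ℝ) (x : Fin n → Fin d → ℝ) (θ : Fin d → ℝ) (β : ℝ)
    (i : Fin n) (g : (Fin n → Bool) → ℝ)
    (hg : ∀ s b, g (Function.update s i b) = g s) :
    ∑ s : Fin n → Bool,
      (conf s i - Real.tanh (β * fder w i (conf s) + θ ⬝ᵥ x i)) * g s
        * Real.exp (ham w x θ β s) = 0 := by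
  classical
  apply Finset.sum_ninvolution (fun s => Function.update s i (!(s i)))
  · intro s
    set a := β * fder w i (conf s) + θ ⬝ᵥ x i with ha
    have hf : fder w i (conf (Function.update s i (!(s i)))) = fder w i (conf s) :=
      fder_update w i s _
    have hr : rest w x θ β i (Function.update s i (!(s i))) = rest w x θ β i s :=
      rest_update w x θ β i s _
    have hci : conf (Function.update s i (!(s i))) i = - conf s i := by
      cases h : s i <;> simp [conf, sgn, h]
    have hham1 : ham w x θ β s = a * conf s i + rest w x θ β i s := by
      rw [ham_decomp w x θ β i s]
    have hham2 : ham w x θ β (Function.update s i (!(s i)))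
        = a * (-conf s i) + rest w x θ β i s := by
      rw [ham_decomp w x θ β i (Function.update s i (!(s i))), hf, hr, hci, ha]
    rw [hham1, hham2, hg s, hf, hci, ha]
    have hp := pair_zero (β * fder w i (conf s) + θ ⬝ᵥ x i) (rest w x θ β i s)
      (conf_cases s i)
    set y := conf s i
    set t := Real.tanh (β * fder w i (conf s) + θ ⬝ᵥ x i)
    linear_combination g s * hp
  · intro s _ heq
    have := congrFun heq i
    simp at this
  · intro s; exact Finset.mem_univ _
  · intro s
    simp [Function.update_idem, Function.update_eq_self]

/-- The summand of Q. -/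
def Tm (w : Finset (Fin n) → ℝ) (x : Fin n → Fin d → ℝ) (θ : Fin d → ℝ) (β : ℝ)
    (i : Fin n) (s : Fin n → Bool) : ℝ :=
  (conf s i - Real.tanh (β * fder w i (conf s) + θ ⬝ᵥ x i)) * fder w i (conf s)

lemma abs_Tm_le_two {w : Finset (Fin n) → ℝ} (x : Fin n → Fin d → ℝ) (θ : Fin d → ℝ) (β : ℝ)
    (hdeg : ∀ i : Fin n,
      ∑ e ∈ Finset.univ.filter (fun e : Finset (Fin n) => i ∈ e), |w e| ≤ 1)
    (i : Fin n) (s : Fin n → Bool) : |Tm w x θ β i s| ≤ 2 := by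
  rw [Tm, abs_mul]
  have h1 : |conf s i - Real.tanh (β * fder w i (conf s) + θ ⬝ᵥ x i)| ≤ 2 := by
    have := abs_conf s i
    have := abs_tanh_le_one (β * fder w i (conf s) + θ ⬝ᵥ x i)
    calc |conf s i - Real.tanh (β * fder w i (conf s) + θ ⬝ᵥ x i)|
        ≤ |conf s i| + |Real.tanh (β * fder w i (conf s) + θ ⬝ᵥ x i)| := abs_sub _ _
      _ ≤ 2 := by linarith
  have h2 := abs_fder_le hdeg i s
  have h3 : (0:ℝ) ≤ |conf s i - Real.tanh (β * fder w i (conf s) + θ ⬝ᵥ x i)| := abs_nonneg _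
  nlinarith

lemma fder_diff {w : Finset (Fin n) → ℝ} (i j : Fin n) (hij : i ≠ j) (s : Fin n → Bool)
    (b : Bool) :
    |fder w i (conf s) - fder w i (conf (Function.update s j b))|
      ≤ 2 * ∑ e ∈ Finset.univ.filter (fun e : Finset (Fin n) => i ∈ e ∧ j ∈ e), |w e| := by
  set s' := Function.update s j b
  have hsub : fder w i (conf s) - fder w i (conf s')
      = ∑ e ∈ Finset.univ.filter (fun e : Finset (Fin n) => i ∈ e),
          w e * ((∏ v ∈ e.erase i, conf s v) - ∏ v ∈ e.erase i, conf s' v) := by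
    rw [fder, fder, ← Finset.sum_sub_distrib]
    exact Finset.sum_congr rfl fun e _ => by ring
  rw [hsub]
  calc |∑ e ∈ Finset.univ.filter (fun e : Finset (Fin n) => i ∈ e),
          w e * ((∏ v ∈ e.erase i, conf s v) - ∏ v ∈ e.erase i, conf s' v)|
      ≤ ∑ e ∈ Finset.univ.filter (fun e : Finset (Fin n) => i ∈ e),
          |w e * ((∏ v ∈ e.erase i, conf s v) - ∏ v ∈ e.erase i, conf s' v)| :=
        Finset.abs_sum_le_sum_abs _ _
    _ = ∑ e ∈ (Finset.univ.filter (fun e : Finset (Fin n) => i ∈ e)).filter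
          (fun e => j ∈ e),
          |w e * ((∏ v ∈ e.erase i, conf s v) - ∏ v ∈ e.erase i, conf s' v)|
        + ∑ e ∈ (Finset.univ.filter (fun e : Finset (Fin n) => i ∈ e)).filter
          (fun e => j ∉ e),
          |w e * ((∏ v ∈ e.erase i, conf s v) - ∏ v ∈ e.erase i, conf s' v)| :=
        (Finset.sum_filter_add_sum_filter_not _ _ _).symm
    _ = ∑ e ∈ (Finset.univ.filter (fun e : Finset (Fin n) => i ∈ e)).filter
          (fun e => j ∈ e),
          |w e * ((∏ v ∈ e.erase i, conf s v) - ∏ v ∈ e.erase i, conf s' v)| := by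
        rw [add_eq_left]
        refine Finset.sum_eq_zero fun e he => ?_
        have hj : j ∉ e := (Finset.mem_filter.mp he).2
        have : ∏ v ∈ e.erase i, conf s' v = ∏ v ∈ e.erase i, conf s v :=
          prod_conf_update s j b _ (fun hc => hj (Finset.mem_of_mem_erase hc))
        rw [this, sub_self, mul_zero, abs_zero]
    _ ≤ ∑ e ∈ (Finset.univ.filter (fun e : Finset (Fin n) => i ∈ e)).filter
          (fun e => j ∈ e), |w e| * 2 := by
        refine Finset.sum_le_sum fun e _ => ?_
        rw [abs_mul]
        refine mul_le_mul_of_nonneg_left ?_ (abs_nonneg _)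
        calc |(∏ v ∈ e.erase i, conf s v) - ∏ v ∈ e.erase i, conf s' v|
            ≤ |∏ v ∈ e.erase i, conf s v| + |∏ v ∈ e.erase i, conf s' v| := abs_sub _ _
          _ = 2 := by rw [abs_prod_conf, abs_prod_conf]; norm_num
    _ = 2 * ∑ e ∈ Finset.univ.filter (fun e : Finset (Fin n) => i ∈ e ∧ j ∈ e), |w e| := by
        rw [Finset.filter_filter, Finset.mul_sum]
        exact Finset.sum_congr rfl fun e _ => by ring

lemma sum_S_le {m : ℕ} {w : Finset (Fin n) → ℝ} (hm : 2 ≤ m)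
    (hcard : ∀ e : Finset (Fin n), w e ≠ 0 → 2 ≤ e.card ∧ e.card ≤ m)
    (hdeg : ∀ i : Fin n,
      ∑ e ∈ Finset.univ.filter (fun e : Finset (Fin n) => i ∈ e), |w e| ≤ 1)
    (j : Fin n) :
    ∑ i ∈ Finset.univ.erase j,
      ∑ e ∈ Finset.univ.filter (fun e : Finset (Fin n) => i ∈ e ∧ j ∈ e), |w e|
      ≤ (m : ℝ) - 1 := by
  have hstep : ∀ i : Fin n,
      ∑ e ∈ Finset.univ.filter (fun e : Finset (Fin n) => i ∈ e ∧ j ∈ e), |w e|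
      = ∑ e ∈ Finset.univ.filter (fun e : Finset (Fin n) => j ∈ e),
          if i ∈ e then |w e| else 0 := by
    intro i
    rw [Finset.sum_filter]
    rw [Finset.sum_filter]
    refine Finset.sum_congr rfl fun e _ => ?_
    by_cases h1 : i ∈ e <;> by_cases h2 : j ∈ e <;> simp [h1, h2]
  calc ∑ i ∈ Finset.univ.erase j,
      ∑ e ∈ Finset.univ.filter (fun e : Finset (Fin n) => i ∈ e ∧ j ∈ e), |w e|
      = ∑ e ∈ Finset.univ.filter (fun e : Finset (Fin n) => j ∈ e),
          ∑ i ∈ Finset.univ.erase j, (if i ∈ e then |w e| else 0) := by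
        rw [← Finset.sum_comm]
        exact Finset.sum_congr rfl fun i _ => hstep i
    _ = ∑ e ∈ Finset.univ.filter (fun e : Finset (Fin n) => j ∈ e),
          ((e.erase j).card : ℝ) * |w e| := by
        refine Finset.sum_congr rfl fun e _ => ?_
        rw [← Finset.sum_filter]
        have he : (Finset.univ.erase j).filter (fun i => i ∈ e) = e.erase j := by
          ext i
          simp [Finset.mem_erase, and_comm]
        rw [he, Finset.sum_const, nsmul_eq_mul]
    _ ≤ ∑ e ∈ Finset.univ.filter (fun e : Finset (Fin n) => j ∈ e),
          ((m : ℝ) - 1) * |w e| := by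
        refine Finset.sum_le_sum fun e he => ?_
        by_cases hw : w e = 0
        · simp [hw]
        · refine mul_le_mul_of_nonneg_right ?_ (abs_nonneg _)
          obtain ⟨h2, hmm⟩ := hcard e hw
          have hj : j ∈ e := (Finset.mem_filter.mp he).2
          have : (e.erase j).card = e.card - 1 := Finset.card_erase_of_mem hj
          rw [this]
          have h1 : 1 ≤ e.card := le_trans (by norm_num) h2
          push_cast [Nat.cast_sub h1]
          have : (e.card : ℝ) ≤ m := by exact_mod_cast hmm
          linarith
    _ = ((m : ℝ) - 1) * ∑ e ∈ Finset.univ.filter (fun e : Finset (Fin n) => j ∈ e), |w e| := by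
        rw [Finset.mul_sum]
    _ ≤ ((m : ℝ) - 1) * 1 := by
        refine mul_le_mul_of_nonneg_left (hdeg j) ?_
        have : (2:ℝ) ≤ m := by exact_mod_cast hm
        linarith
    _ = (m : ℝ) - 1 := mul_one _

lemma Tm_diff {w : Finset (Fin n) → ℝ} {x : Fin n → Fin d → ℝ} {θ : Fin d → ℝ} {β B : ℝ}
    (hdeg : ∀ i : Fin n,
      ∑ e ∈ Finset.univ.filter (fun e : Finset (Fin n) => i ∈ e), |w e| ≤ 1)
    (hβ : |β| ≤ B) (i j : Fin n) (hij : i ≠ j) (s : Fin n → Bool) (b : Bool) :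
    |Tm w x θ β i s - Tm w x θ β i (Function.update s j b)|
      ≤ (2 + B) * |fder w i (conf s) - fder w i (conf (Function.update s j b))| := by
  set s' := Function.update s j b
  set a := fder w i (conf s)
  set a' := fder w i (conf s')
  set c := θ ⬝ᵥ x i
  set t := Real.tanh (β * a + c)
  set t' := Real.tanh (β * a' + c)
  have hy : conf s' i = conf s i := conf_update_ne s j i b hij
  have hkey : Tm w x θ β i s - Tm w x θ β i s'
      = (conf s i - t) * (a - a') + (t' - t) * a' := by
    rw [Tm, Tm, hy]; ring
  rw [hkey]
  have h1 : |conf s i - t| ≤ 2 := by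
    have := abs_conf s i
    have := abs_tanh_le_one (β * a + c)
    calc |conf s i - t| ≤ |conf s i| + |t| := abs_sub _ _
      _ ≤ 2 := by unfold t; linarith
  have h2 : |t' - t| ≤ B * |a - a'| := by
    calc |t' - t| ≤ |(β * a' + c) - (β * a + c)| := tanh_lipschitz _ _
      _ = |β| * |a' - a| := by rw [← abs_mul]; congr 1; ring
      _ ≤ B * |a - a'| := by
          rw [abs_sub_comm a' a]
          exact mul_le_mul_of_nonneg_right hβ (abs_nonneg _) |>.trans_eq rfl
  have h3 : |a'| ≤ 1 := abs_fder_le hdeg i s'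
  calc |(conf s i - t) * (a - a') + (t' - t) * a'|
      ≤ |(conf s i - t) * (a - a')| + |(t' - t) * a'| := abs_add_le _ _
    _ = |conf s i - t| * |a - a'| + |t' - t| * |a'| := by rw [abs_mul, abs_mul]
    _ ≤ 2 * |a - a'| + (B * |a - a'|) * 1 := by
        refine add_le_add (mul_le_mul_of_nonneg_right h1 (abs_nonneg _)) ?_
        refine mul_le_mul h2 h3 (abs_nonneg _) ?_
        have := (abs_nonneg β).trans hβ
        positivity
    _ = (2 + B) * |a - a'| := by ring

lemma Q_lip {w : Finset (Fin n) → ℝ} {x : Fin n → Fin d → ℝ} {θ : Fin d → ℝ} {β B : ℝ}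
    {m : ℕ} (hm : 2 ≤ m)
    (hcard : ∀ e : Finset (Fin n), w e ≠ 0 → 2 ≤ e.card ∧ e.card ≤ m)
    (hdeg : ∀ i : Fin n,
      ∑ e ∈ Finset.univ.filter (fun e : Finset (Fin n) => i ∈ e), |w e| ≤ 1)
    (hβ : |β| ≤ B) (j : Fin n) (s : Fin n → Bool) (b : Bool) :
    |(∑ i, Tm w x θ β i s) - ∑ i, Tm w x θ β i (Function.update s j b)|
      ≤ (6 + 2 * B) * ((m : ℝ) - 1) := by
  set s' := Function.update s j b
  have hB : 0 ≤ B := (abs_nonneg β).trans hβ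
  have hm' : (2:ℝ) ≤ m := by exact_mod_cast hm
  have hsub : (∑ i, Tm w x θ β i s) - ∑ i, Tm w x θ β i s'
      = ∑ i, (Tm w x θ β i s - Tm w x θ β i s') := by
    rw [← Finset.sum_sub_distrib]
  rw [hsub]
  have hj : |Tm w x θ β j s - Tm w x θ β j s'| ≤ 2 := by
    have hf : fder w j (conf s') = fder w j (conf s) := fder_update w j s b
    have hkey : Tm w x θ β j s - Tm w x θ β j s'
        = (conf s j - conf s' j) * fder w j (conf s) := by
      rw [Tm, Tm, hf]; ring
    rw [hkey, abs_mul]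
    have h1 : |conf s j - conf s' j| ≤ 2 := by
      have := abs_conf s j
      have := abs_conf s' j
      calc |conf s j - conf s' j| ≤ |conf s j| + |conf s' j| := abs_sub _ _
        _ ≤ 2 := by linarith
    have h2 := abs_fder_le hdeg j s
    nlinarith [abs_nonneg (conf s j - conf s' j)]
  calc |∑ i, (Tm w x θ β i s - Tm w x θ β i s')|
      ≤ ∑ i, |Tm w x θ β i s - Tm w x θ β i s'| := Finset.abs_sum_le_sum_abs _ _
    _ = (∑ i ∈ Finset.univ.erase j, |Tm w x θ β i s - Tm w x θ β i s'|)
        + |Tm w x θ β j s - Tm w x θ β j s'| :=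
        (Finset.sum_erase_add _ _ (Finset.mem_univ j)).symm
    _ ≤ (∑ i ∈ Finset.univ.erase j, (2 + B) * (2 *
          ∑ e ∈ Finset.univ.filter (fun e : Finset (Fin n) => i ∈ e ∧ j ∈ e), |w e|)) + 2 := by
        refine add_le_add (Finset.sum_le_sum fun i hi => ?_) hj
        have hij : i ≠ j := Finset.ne_of_mem_erase hi
        calc |Tm w x θ β i s - Tm w x θ β i s'|
            ≤ (2 + B) * |fder w i (conf s) - fder w i (conf s')| :=
              Tm_diff hdeg hβ i j hij s b
          _ ≤ (2 + B) * (2 *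
              ∑ e ∈ Finset.univ.filter (fun e : Finset (Fin n) => i ∈ e ∧ j ∈ e), |w e|) :=
              mul_le_mul_of_nonneg_left (fder_diff i j hij s b) (by linarith)
    _ ≤ (2 + B) * (2 * ((m:ℝ) - 1)) + 2 := by
        have hS := sum_S_le hm hcard hdeg j
        have : ∑ i ∈ Finset.univ.erase j, (2 + B) * (2 *
            ∑ e ∈ Finset.univ.filter (fun e : Finset (Fin n) => i ∈ e ∧ j ∈ e), |w e|)
            = (2 + B) * (2 * ∑ i ∈ Finset.univ.erase j,
              ∑ e ∈ Finset.univ.filter (fun e : Finset (Fin n) => i ∈ e ∧ j ∈ e), |w e|) := by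
          rw [Finset.mul_sum, Finset.mul_sum]
        rw [this]
        have h0 : (0:ℝ) ≤ 2 + B := by linarith
        nlinarith
    _ ≤ (6 + 2 * B) * ((m : ℝ) - 1) := by nlinarith


end Stmt12Aux

open Stmt12Aux in
theorem stmt12 {n d m : ℕ} (hm : 2 ≤ m) (w : Finset (Fin n) → ℝ)
    (x : Fin n → Fin d → ℝ) (θ₀ : Fin d → ℝ) (β₀ B : ℝ)
    (hcard : ∀ e : Finset (Fin n), w e ≠ 0 → 2 ≤ e.card ∧ e.card ≤ m)
    (hdeg : ∀ i : Fin n,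
      ∑ e ∈ Finset.univ.filter (fun e : Finset (Fin n) => i ∈ e), |w e| ≤ 1)
    (hβ : |β₀| ≤ B)
    (Q : (Fin n → Bool) → ℝ)
    (hQ : ∀ s, Q s = ∑ i,
      (conf s i - Real.tanh (β₀ * fder w i (conf s) + θ₀ ⬝ᵥ x i)) * fder w i (conf s)) :
    expec w x θ₀ β₀ (fun s => (Q s) ^ 2) ≤ (12 + 4 * B) * ((m : ℝ) - 1) * n := by
  classical
  have hB : 0 ≤ B := (abs_nonneg β₀).trans hβ
  have hm' : (2:ℝ) ≤ m := by exact_mod_cast hm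
  have hQ' : ∀ s, Q s = ∑ i, Tm w x θ₀ β₀ i s := hQ
  set Z := ∑ s : Fin n → Bool, Real.exp (ham w x θ₀ β₀ s) with hZdef
  have hZ : 0 < Z := Finset.sum_pos (fun s _ => Real.exp_pos _) Finset.univ_nonempty
  rw [expec, div_le_iff₀ hZ]
  -- rewrite numerator
  have hnum : ∑ s : Fin n → Bool, Q s ^ 2 * Real.exp (ham w x θ₀ β₀ s)
      = ∑ i : Fin n, ∑ s : Fin n → Bool,
          Tm w x θ₀ β₀ i s * Q s * Real.exp (ham w x θ₀ β₀ s) := by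
    rw [Finset.sum_comm]
    refine Finset.sum_congr rfl fun s _ => ?_
    rw [← Finset.sum_mul, ← Finset.sum_mul, ← hQ' s, sq]
  rw [hnum]
  have hbound : ∀ i : Fin n,
      ∑ s : Fin n → Bool, Tm w x θ₀ β₀ i s * Q s * Real.exp (ham w x θ₀ β₀ s)
      ≤ (12 + 4 * B) * ((m : ℝ) - 1) * Z := by
    intro i
    have hkz := key_zero w x θ₀ β₀ i
      (fun s => fder w i (conf s) * Q (Function.update s i false))
      (by
        intro s b
        beta_reduce
        rw [fder_update w i s b, Function.update_idem])
    have hre : ∑ s : Fin n → Bool, Tm w x θ₀ β₀ i s * Q s * Real.exp (ham w x θ₀ β₀ s)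
        = ∑ s : Fin n → Bool, Tm w x θ₀ β₀ i s
            * (Q s - Q (Function.update s i false)) * Real.exp (ham w x θ₀ β₀ s) := by
      have := hkz
      rw [← sub_zero (∑ s : Fin n → Bool,
        Tm w x θ₀ β₀ i s * Q s * Real.exp (ham w x θ₀ β₀ s)), ← this,
        ← Finset.sum_sub_distrib]
      refine Finset.sum_congr rfl fun s _ => ?_
      rw [Tm]
      ring
    rw [hre]
    calc ∑ s : Fin n → Bool, Tm w x θ₀ β₀ i s
          * (Q s - Q (Function.update s i false)) * Real.exp (ham w x θ₀ β₀ s)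
        ≤ ∑ s : Fin n → Bool,
            ((12 + 4 * B) * ((m : ℝ) - 1)) * Real.exp (ham w x θ₀ β₀ s) := by
          refine Finset.sum_le_sum fun s _ => ?_
          refine mul_le_mul_of_nonneg_right ?_ (Real.exp_pos _).le
          have h1 : |Tm w x θ₀ β₀ i s| ≤ 2 := abs_Tm_le_two x θ₀ β₀ hdeg i s
          have h2 : |Q s - Q (Function.update s i false)| ≤ (6 + 2 * B) * ((m : ℝ) - 1) := by
            rw [hQ' s, hQ' (Function.update s i false)]
            exact Q_lip hm hcard hdeg hβ i s false
          calc Tm w x θ₀ β₀ i s * (Q s - Q (Function.update s i false))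
              ≤ |Tm w x θ₀ β₀ i s * (Q s - Q (Function.update s i false))| := le_abs_self _
            _ = |Tm w x θ₀ β₀ i s| * |Q s - Q (Function.update s i false)| := abs_mul _ _
            _ ≤ 2 * ((6 + 2 * B) * ((m : ℝ) - 1)) := by
                refine mul_le_mul h1 h2 (abs_nonneg _) (by norm_num)
            _ = (12 + 4 * B) * ((m : ℝ) - 1) := by ring
      _ = (12 + 4 * B) * ((m : ℝ) - 1) * Z := by rw [← Finset.mul_sum]
  calc ∑ i : Fin n, ∑ s : Fin n → Bool,
        Tm w x θ₀ β₀ i s * Q s * Real.exp (ham w x θ₀ β₀ s)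
      ≤ ∑ _i : Fin n, (12 + 4 * B) * ((m : ℝ) - 1) * Z :=
        Finset.sum_le_sum fun i _ => hbound i
    _ = (12 + 4 * B) * ((m : ℝ) - 1) * n * Z := by
        rw [Finset.sum_const, Finset.card_univ, Fintype.card_fin, nsmul_eq_mul]
        ring
end
end

section
/- In the Ising-type model of the previous context and assuming additionally ‖x_v‖₂ ≤ M for all v, for each coordinate k define Q_k(y) = Σᵢ (yᵢ - tanh(β₀ fᵢ(y₋ᵢ) + θ₀^T xᵢ)) x_{i,k}. Then Σ_{k=1}^d E[Q_k(y)²] ≤ 4(1+B)M²(m-1)·d·n. -/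
open Matrix

noncomputable section

-- tanh facts
lemma tanh_id (u : ℝ) : (1 - Real.tanh u) * Real.exp (2*u) = 1 + Real.tanh u := by
  rw [Real.tanh_eq_sinh_div_cosh, Real.sinh_eq, Real.cosh_eq, two_mul, Real.exp_add,
    Real.exp_neg]
  have h := Real.exp_pos u
  field_simp
  ring

lemma abs_tanh_le_one (u : ℝ) : |Real.tanh u| ≤ 1 := by
  rw [Real.tanh_eq_sinh_div_cosh, abs_div, abs_of_pos (Real.cosh_pos u),
    div_le_one (Real.cosh_pos u), abs_le]
  constructor
  · have := Real.sinh_lt_cosh (-u)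
    simp [Real.sinh_neg, Real.cosh_neg] at this
    linarith
  · exact (Real.sinh_lt_cosh u).le

lemma tanh_hasDerivAt (u : ℝ) : HasDerivAt Real.tanh (1 / Real.cosh u ^ 2) u := by
  have h := (Real.hasDerivAt_sinh u).div (Real.hasDerivAt_cosh u) (Real.cosh_pos u).ne'
  have he : Real.tanh = fun x => Real.sinh x / Real.cosh x := by
    funext x; exact Real.tanh_eq_sinh_div_cosh x
  rw [he, ← Pi.div_def]
  refine h.congr_deriv ?_
  have := Real.cosh_sq_sub_sinh_sq u
  refine congrArg (· / Real.cosh u ^ 2) ?_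
  nlinarith [this]

lemma tanh_lip (a b : ℝ) : |Real.tanh a - Real.tanh b| ≤ |a - b| := by
  have h := Convex.norm_image_sub_le_of_norm_deriv_le (f := Real.tanh) (C := 1) (s := Set.univ)
    (fun x _ => (tanh_hasDerivAt x).differentiableAt)
    (fun x _ => by
      rw [(tanh_hasDerivAt x).deriv]
      rw [Real.norm_eq_abs, abs_of_pos (by positivity)]
      rw [div_le_one (by positivity)]
      nlinarith [Real.one_le_cosh x])
    convex_univ (Set.mem_univ b) (Set.mem_univ a)
  simpa using h

lemma abs_sgn (b : Bool) : |sgn b| = 1 := by cases b <;> simp [sgn]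

lemma abs_conf {n : ℕ} (s : Fin n → Bool) (v : Fin n) : |conf s v| = 1 := abs_sgn _

lemma conf_update_ne {n : ℕ} (s : Fin n → Bool) (i v : Fin n) (b : Bool) (h : v ≠ i) :
    conf (Function.update s i b) v = conf s v := by
  simp [conf, Function.update_of_ne h]

lemma conf_update_self {n : ℕ} (s : Fin n → Bool) (i : Fin n) (b : Bool) :
    conf (Function.update s i b) i = sgn b := by simp [conf]

lemma fder_update {n : ℕ} (w : Finset (Fin n) → ℝ) (s : Fin n → Bool) (i : Fin n) (b : Bool) :
    fder w i (conf (Function.update s i b)) = fder w i (conf s) := by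
  unfold fder
  refine Finset.sum_congr rfl fun e _ => ?_
  congr 1
  refine Finset.prod_congr rfl fun v hv => ?_
  exact conf_update_ne s i v b (Finset.ne_of_mem_erase hv)

lemma pair_sum {n : ℕ} (G : (Fin n → Bool) → ℝ) (i : Fin n) :
    ∑ s : Fin n → Bool, G s
      = (1/2) * ∑ s : Fin n → Bool,
          (G (Function.update s i true) + G (Function.update s i false)) := by
  have hinv : Function.Involutive (fun s : Fin n → Bool => Function.update s i (!s i)) := by
    intro s; funext v
    by_cases h : v = i
    · subst h; simp
    · simp [Function.update_of_ne h]
  have hflip : ∑ s : Fin n → Bool, G (Function.update s i (!s i)) = ∑ s : Fin n → Bool, G s :=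
    Fintype.sum_equiv hinv.toPerm _ G fun s => rfl
  have key : ∀ s : Fin n → Bool,
      G (Function.update s i true) + G (Function.update s i false)
        = G s + G (Function.update s i (!s i)) := by
    intro s
    cases h : s i
    · have h1 : Function.update s i false = s := by
        funext v; by_cases hv : v = i
        · subst hv; simp [h]
        · simp [Function.update_of_ne hv]
      rw [h1, Bool.not_false]; ring
    · have h1 : Function.update s i true = s := by
        funext v; by_cases hv : v = i
        · subst hv; simp [h]
        · simp [Function.update_of_ne hv]
      rw [h1, Bool.not_true]
  rw [Finset.sum_congr rfl (fun s _ => key s), Finset.sum_add_distrib, hflip]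
  ring

lemma fpoly_update {n : ℕ} (w : Finset (Fin n) → ℝ) (s : Fin n → Bool) (i : Fin n) (b : Bool) :
    fpoly w (conf (Function.update s i b))
      = sgn b * fder w i (conf s)
        + ∑ e ∈ Finset.univ.filter (fun e : Finset (Fin n) => ¬ i ∈ e),
            w e * ∏ v ∈ e, conf s v := by
  unfold fpoly fder
  rw [← Finset.sum_filter_add_sum_filter_not Finset.univ (fun e : Finset (Fin n) => i ∈ e)]
  congr 1
  · rw [Finset.mul_sum]
    refine Finset.sum_congr rfl fun e he => ?_
    have hie : i ∈ e := (Finset.mem_filter.1 he).2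
    rw [← Finset.mul_prod_erase e _ hie, conf_update_self]
    have hp : ∏ v ∈ e.erase i, conf (Function.update s i b) v = ∏ v ∈ e.erase i, conf s v :=
      Finset.prod_congr rfl fun v hv => conf_update_ne s i v b (Finset.ne_of_mem_erase hv)
    rw [hp]; ring
  · refine Finset.sum_congr rfl fun e he => ?_
    have hie : i ∉ e := (Finset.mem_filter.1 he).2
    congr 1
    exact Finset.prod_congr rfl fun v hv => conf_update_ne s i v b (fun h => hie (h ▸ hv))

lemma ham_update {n d : ℕ} (w : Finset (Fin n) → ℝ) (x : Fin n → Fin d → ℝ)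
    (θ : Fin d → ℝ) (β : ℝ) (s : Fin n → Bool) (i : Fin n) (b : Bool) :
    ham w x θ β (Function.update s i b)
      = (β * ∑ e ∈ Finset.univ.filter (fun e : Finset (Fin n) => ¬ i ∈ e),
            w e * ∏ v ∈ e, conf s v
          + ∑ v ∈ Finset.univ.erase i, (θ ⬝ᵥ x v) * conf s v)
        + sgn b * (β * fder w i (conf s) + θ ⬝ᵥ x i) := by
  unfold ham
  rw [fpoly_update,
    ← Finset.add_sum_erase _ _ (Finset.mem_univ i), conf_update_self]
  have h2 : ∑ v ∈ Finset.univ.erase i, (θ ⬝ᵥ x v) * conf (Function.update s i b) v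
      = ∑ v ∈ Finset.univ.erase i, (θ ⬝ᵥ x v) * conf s v :=
    Finset.sum_congr rfl fun v hv => by
      rw [conf_update_ne s i v b (Finset.ne_of_mem_erase hv)]
  rw [h2]; ring

lemma prod_update_erase {n : ℕ} (s : Fin n → Bool) (i : Fin n) (b : Bool)
    (t : Finset (Fin n)) (hit : i ∈ t) :
    ∏ v ∈ t, conf (Function.update s i b) v = sgn b * ∏ v ∈ t.erase i, conf s v := by
  rw [← Finset.mul_prod_erase t _ hit, conf_update_self]
  congr 1
  exact Finset.prod_congr rfl fun v hv => conf_update_ne s i v b (Finset.ne_of_mem_erase hv)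

lemma abs_prod_conf {n : ℕ} (s : Fin n → Bool) (t : Finset (Fin n)) :
    |∏ v ∈ t, conf s v| = 1 := by
  rw [Finset.abs_prod]
  rw [Finset.prod_congr rfl fun v _ => abs_conf s v]
  simp

lemma fder_diff {n : ℕ} (w : Finset (Fin n) → ℝ) (s : Fin n → Bool) (i j : Fin n)
    (hij : j ≠ i) :
    |fder w j (conf (Function.update s i true)) - fder w j (conf (Function.update s i false))|
      ≤ ∑ e ∈ Finset.univ.filter (fun e : Finset (Fin n) => i ∈ e ∧ j ∈ e), 2 * |w e| := by
  unfold fder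
  rw [← Finset.sum_sub_distrib]
  refine le_trans (Finset.abs_sum_le_sum_abs _ _) ?_
  have key : ∀ e ∈ Finset.univ.filter (fun e : Finset (Fin n) => j ∈ e),
      |w e * ∏ v ∈ e.erase j, conf (Function.update s i true) v
        - w e * ∏ v ∈ e.erase j, conf (Function.update s i false) v|
        ≤ if i ∈ e then 2 * |w e| else 0 := by
    intro e he
    by_cases hie : i ∈ e
    · rw [if_pos hie]
      have hie' : i ∈ e.erase j := Finset.mem_erase.2 ⟨Ne.symm hij, hie⟩
      rw [prod_update_erase s i true _ hie', prod_update_erase s i false _ hie']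
      have habs := abs_prod_conf s ((e.erase j).erase i)
      have : w e * (sgn true * ∏ v ∈ (e.erase j).erase i, conf s v)
            - w e * (sgn false * ∏ v ∈ (e.erase j).erase i, conf s v)
          = 2 * w e * ∏ v ∈ (e.erase j).erase i, conf s v := by
        simp [sgn]; ring
      rw [this, abs_mul, abs_mul, habs, abs_of_nonneg (by norm_num : (0:ℝ) ≤ 2)]
      simp [mul_comm]
    · rw [if_neg hie]
      have hp : ∀ b, ∏ v ∈ e.erase j, conf (Function.update s i b) v
          = ∏ v ∈ e.erase j, conf s v := fun b =>
        Finset.prod_congr rfl fun v hv =>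
          conf_update_ne s i v b (fun h => hie (h ▸ Finset.mem_of_mem_erase hv))
      rw [hp, hp]
      simp
  refine le_trans (Finset.sum_le_sum key) ?_
  rw [Finset.sum_filter, Finset.sum_filter]
  refine le_of_eq (Finset.sum_congr rfl fun e _ => ?_)
  by_cases h1 : i ∈ e <;> by_cases h2 : j ∈ e <;> simp [h1, h2]

lemma dc {n m : ℕ} (hm : 2 ≤ m) (w : Finset (Fin n) → ℝ)
    (hcard : ∀ e : Finset (Fin n), w e ≠ 0 → 2 ≤ e.card ∧ e.card ≤ m)
    (i : Fin n)
    (hdeg1 : ∑ e ∈ Finset.univ.filter (fun e : Finset (Fin n) => i ∈ e), |w e| ≤ 1) :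
    ∑ j ∈ Finset.univ.erase i,
        ∑ e ∈ Finset.univ.filter (fun e : Finset (Fin n) => i ∈ e ∧ j ∈ e), 2 * |w e|
      ≤ 2 * ((m : ℝ) - 1) := by
  have hm1 : (1:ℝ) ≤ (m:ℝ) - 1 := by
    have : (2:ℝ) ≤ (m:ℝ) := by exact_mod_cast hm
    linarith
  have step1 : ∀ j : Fin n,
      ∑ e ∈ Finset.univ.filter (fun e : Finset (Fin n) => i ∈ e ∧ j ∈ e), 2 * |w e|
        = ∑ e : Finset (Fin n), if i ∈ e ∧ j ∈ e then 2 * |w e| else 0 := fun j =>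
    Finset.sum_filter _ _
  rw [Finset.sum_congr rfl fun j _ => step1 j, Finset.sum_comm]
  have step2 : ∀ e : Finset (Fin n),
      (∑ j ∈ Finset.univ.erase i, if i ∈ e ∧ j ∈ e then 2 * |w e| else 0)
        ≤ if i ∈ e then ((m:ℝ) - 1) * (2 * |w e|) else 0 := by
    intro e
    by_cases hie : i ∈ e
    · rw [if_pos hie]
      have hif : ∀ j, (if i ∈ e ∧ j ∈ e then 2 * |w e| else 0)
          = if j ∈ e then 2 * |w e| else 0 := by intro j; simp [hie]
      rw [Finset.sum_congr rfl fun j _ => hif j, ← Finset.sum_filter]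
      have hset : (Finset.univ.erase i).filter (fun j => j ∈ e) = e.erase i := by
        ext j; simp [Finset.mem_erase, and_comm]
      rw [hset, Finset.sum_const, Finset.card_erase_of_mem hie, nsmul_eq_mul]
      by_cases hw : w e = 0
      · simp [hw]
      · have h2 := (hcard e hw).2
        have hcast : ((e.card - 1 : ℕ) : ℝ) ≤ (m : ℝ) - 1 := by
          have h3 : e.card - 1 ≤ m - 1 := by omega
          calc ((e.card - 1 : ℕ):ℝ) ≤ ((m - 1 : ℕ):ℝ) := Nat.cast_le.2 h3
            _ = (m:ℝ) - 1 := by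
              have h4 : (1:ℕ) ≤ m := by omega
              push_cast [Nat.cast_sub h4]; ring
        exact mul_le_mul_of_nonneg_right hcast (by positivity)
    · simp [hie]
  refine le_trans (Finset.sum_le_sum fun e _ => step2 e) ?_
  rw [← Finset.sum_filter]
  have heq : ∑ e ∈ Finset.univ.filter (fun e : Finset (Fin n) => i ∈ e),
      ((m:ℝ) - 1) * (2 * |w e|)
      = 2 * ((m:ℝ) - 1) * ∑ e ∈ Finset.univ.filter (fun e : Finset (Fin n) => i ∈ e), |w e| := by
    rw [Finset.mul_sum]
    exact Finset.sum_congr rfl fun e _ => by ring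
  rw [heq]
  calc 2 * ((m:ℝ) - 1) * ∑ e ∈ Finset.univ.filter (fun e : Finset (Fin n) => i ∈ e), |w e|
      ≤ 2 * ((m:ℝ) - 1) * 1 := by
        refine mul_le_mul_of_nonneg_left hdeg1 (by linarith)
    _ = 2 * ((m:ℝ) - 1) := by ring

lemma xabs {n d : ℕ} (x : Fin n → Fin d → ℝ) (M : ℝ)
    (hx : ∀ i, Real.sqrt (∑ k, x i k ^ 2) ≤ M) (j : Fin n) (k : Fin d) : |x j k| ≤ M := by
  have h1 : x j k ^ 2 ≤ ∑ k', x j k' ^ 2 :=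
    Finset.single_le_sum (f := fun k' => x j k' ^ 2) (fun k' _ => sq_nonneg _) (Finset.mem_univ k)
  calc |x j k| = Real.sqrt (x j k ^ 2) := (Real.sqrt_sq_eq_abs _).symm
    _ ≤ Real.sqrt (∑ k', x j k' ^ 2) := Real.sqrt_le_sqrt h1
    _ ≤ M := hx j

lemma Qdiff {n d m : ℕ} (hm : 2 ≤ m) (w : Finset (Fin n) → ℝ)
    (x : Fin n → Fin d → ℝ) (θ₀ : Fin d → ℝ) (β₀ B M : ℝ)
    (hcard : ∀ e : Finset (Fin n), w e ≠ 0 → 2 ≤ e.card ∧ e.card ≤ m)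
    (hdeg : ∀ i : Fin n,
      ∑ e ∈ Finset.univ.filter (fun e : Finset (Fin n) => i ∈ e), |w e| ≤ 1)
    (hβ : |β₀| ≤ B)
    (hx : ∀ i, Real.sqrt (∑ k, x i k ^ 2) ≤ M)
    (hM : 0 ≤ M)
    (Q : Fin d → (Fin n → Bool) → ℝ)
    (hQ : ∀ k s, Q k s = ∑ i,
      (conf s i - Real.tanh (β₀ * fder w i (conf s) + θ₀ ⬝ᵥ x i)) * x i k)
    (k : Fin d) (i : Fin n) (s : Fin n → Bool) :
    |Q k (Function.update s i true) - Q k (Function.update s i false)|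
      ≤ 2 * (1 + B) * M * ((m:ℝ) - 1) := by
  have hB : 0 ≤ B := le_trans (abs_nonneg _) hβ
  have hm1 : (1:ℝ) ≤ (m:ℝ) - 1 := by
    have : (2:ℝ) ≤ (m:ℝ) := by exact_mod_cast hm
    linarith
  set F : Fin n → ℝ := fun j =>
    (conf (Function.update s i true) j
        - Real.tanh (β₀ * fder w j (conf (Function.update s i true)) + θ₀ ⬝ᵥ x j)) * x j k
      - (conf (Function.update s i false) j
        - Real.tanh (β₀ * fder w j (conf (Function.update s i false)) + θ₀ ⬝ᵥ x j)) * x j k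
    with hF
  have hsum : Q k (Function.update s i true) - Q k (Function.update s i false) = ∑ j, F j := by
    rw [hQ, hQ, ← Finset.sum_sub_distrib]
  rw [hsum, ← Finset.add_sum_erase Finset.univ F (Finset.mem_univ i)]
  have hFi : |F i| ≤ 2 * M := by
    have h1 : F i = 2 * x i k := by
      rw [hF]
      dsimp only
      simp only [conf_update_self, fder_update]
      simp [sgn]
      ring
    rw [h1, abs_mul, abs_of_nonneg (by norm_num : (0:ℝ) ≤ 2)]
    exact mul_le_mul_of_nonneg_left (xabs x M hx i k) (by norm_num)
  have hFj : ∀ j ∈ Finset.univ.erase i, |F j|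
      ≤ B * M * ∑ e ∈ Finset.univ.filter (fun e : Finset (Fin n) => i ∈ e ∧ j ∈ e), 2 * |w e| := by
    intro j hj
    have hji : j ≠ i := Finset.ne_of_mem_erase hj
    have hc : conf (Function.update s i true) j = conf (Function.update s i false) j := by
      rw [conf_update_ne s i j true hji, conf_update_ne s i j false hji]
    have h1 : F j = (Real.tanh (β₀ * fder w j (conf (Function.update s i false)) + θ₀ ⬝ᵥ x j)
        - Real.tanh (β₀ * fder w j (conf (Function.update s i true)) + θ₀ ⬝ᵥ x j)) * x j k := by
      rw [hF]
      dsimp only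
      rw [hc]; ring
    rw [h1, abs_mul]
    have h2 := tanh_lip (β₀ * fder w j (conf (Function.update s i false)) + θ₀ ⬝ᵥ x j)
      (β₀ * fder w j (conf (Function.update s i true)) + θ₀ ⬝ᵥ x j)
    have h3 : |(β₀ * fder w j (conf (Function.update s i false)) + θ₀ ⬝ᵥ x j)
        - (β₀ * fder w j (conf (Function.update s i true)) + θ₀ ⬝ᵥ x j)|
        = |β₀| * |fder w j (conf (Function.update s i true))
            - fder w j (conf (Function.update s i false))| := by
      rw [← abs_mul, abs_sub_comm]
      congr 1
      ring
    have h4 := fder_diff w s i j hji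
    have hS : (0:ℝ) ≤ ∑ e ∈ Finset.univ.filter
        (fun e : Finset (Fin n) => i ∈ e ∧ j ∈ e), 2 * |w e| :=
      Finset.sum_nonneg fun e _ => by positivity
    calc |Real.tanh _ - Real.tanh _| * |x j k|
        ≤ (|β₀| * |fder w j (conf (Function.update s i true))
            - fder w j (conf (Function.update s i false))|) * |x j k| := by
          refine mul_le_mul_of_nonneg_right ?_ (abs_nonneg _)
          rw [← h3]; exact h2
      _ ≤ (B * ∑ e ∈ Finset.univ.filter (fun e : Finset (Fin n) => i ∈ e ∧ j ∈ e), 2 * |w e|) * M := by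
          refine mul_le_mul ?_ (xabs x M hx j k) (abs_nonneg _) (by positivity)
          exact mul_le_mul hβ h4 (abs_nonneg _) hB
      _ = B * M * ∑ e ∈ Finset.univ.filter (fun e : Finset (Fin n) => i ∈ e ∧ j ∈ e), 2 * |w e| := by
          ring
  calc |F i + ∑ j ∈ Finset.univ.erase i, F j|
      ≤ |F i| + |∑ j ∈ Finset.univ.erase i, F j| := abs_add_le _ _
    _ ≤ 2 * M + ∑ j ∈ Finset.univ.erase i, |F j| :=
        add_le_add hFi (Finset.abs_sum_le_sum_abs _ _)
    _ ≤ 2 * M + ∑ j ∈ Finset.univ.erase i,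
          B * M * ∑ e ∈ Finset.univ.filter (fun e : Finset (Fin n) => i ∈ e ∧ j ∈ e), 2 * |w e| := by
        gcongr with j hj
        exact hFj j hj
    _ = 2 * M + B * M * ∑ j ∈ Finset.univ.erase i,
          ∑ e ∈ Finset.univ.filter (fun e : Finset (Fin n) => i ∈ e ∧ j ∈ e), 2 * |w e| := by
        rw [Finset.mul_sum]
    _ ≤ 2 * M + B * M * (2 * ((m:ℝ) - 1)) :=
        add_le_add_right (mul_le_mul_of_nonneg_left (dc hm w hcard i (hdeg i))
          (mul_nonneg hB hM)) _
    _ ≤ 2 * (1 + B) * M * ((m:ℝ) - 1) := by nlinarith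

lemma Nbound {n d : ℕ} (w : Finset (Fin n) → ℝ) (x : Fin n → Fin d → ℝ)
    (θ₀ : Fin d → ℝ) (β₀ D : ℝ) (q : (Fin n → Bool) → ℝ) (i : Fin n)
    (hD0 : 0 ≤ D)
    (hD : ∀ s : Fin n → Bool,
      |q (Function.update s i true) - q (Function.update s i false)| ≤ D) :
    |∑ s : Fin n → Bool,
        (conf s i - Real.tanh (β₀ * fder w i (conf s) + θ₀ ⬝ᵥ x i)) * q s
          * Real.exp (ham w x θ₀ β₀ s)|
      ≤ 2 * D * ∑ s : Fin n → Bool, Real.exp (ham w x θ₀ β₀ s) := by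
  set H := ham w x θ₀ β₀ with hH
  set G : (Fin n → Bool) → ℝ := fun s =>
    (conf s i - Real.tanh (β₀ * fder w i (conf s) + θ₀ ⬝ᵥ x i)) * q s * Real.exp (H s) with hG
  have pairbound : ∀ s : Fin n → Bool,
      |G (Function.update s i true) + G (Function.update s i false)|
        ≤ 2 * D * Real.exp (H (Function.update s i false)) := by
    intro s
    set u := β₀ * fder w i (conf s) + θ₀ ⬝ᵥ x i with hu
    have hfd : ∀ b, β₀ * fder w i (conf (Function.update s i b)) + θ₀ ⬝ᵥ x i = u := by
      intro b; rw [fder_update]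
    have hamt : H (Function.update s i true)
        = H (Function.update s i false) + 2 * u := by
      rw [hH, ham_update, ham_update]
      simp [sgn]; ring
    have hGt : G (Function.update s i true)
        = (1 - Real.tanh u) * q (Function.update s i true)
            * Real.exp (H (Function.update s i false) + 2*u) := by
      rw [hG]; dsimp only; rw [conf_update_self, hfd, hamt]; simp [sgn]
    have hGf : G (Function.update s i false)
        = (-1 - Real.tanh u) * q (Function.update s i false)
            * Real.exp (H (Function.update s i false)) := by
      rw [hG]; dsimp only; rw [conf_update_self, hfd]; simp [sgn]
    have key : G (Function.update s i true) + G (Function.update s i false)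
        = (1 + Real.tanh u) * Real.exp (H (Function.update s i false))
            * (q (Function.update s i true) - q (Function.update s i false)) := by
      rw [hGt, hGf, Real.exp_add]
      have hid := tanh_id u
      linear_combination
        (q (Function.update s i true) * Real.exp (H (Function.update s i false))) * hid
    rw [key, abs_mul, abs_mul, abs_of_pos (Real.exp_pos _)]
    have h1 : |1 + Real.tanh u| ≤ 2 := by
      have h2 := abs_le.1 (abs_tanh_le_one u)
      exact abs_le.2 ⟨by linarith [h2.1], by linarith [h2.2]⟩
    calc |1 + Real.tanh u| * Real.exp (H (Function.update s i false))
          * |q (Function.update s i true) - q (Function.update s i false)|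
        ≤ 2 * Real.exp (H (Function.update s i false)) * D := by
          refine mul_le_mul ?_ (hD s) (abs_nonneg _) (by positivity)
          exact mul_le_mul_of_nonneg_right h1 (Real.exp_pos _).le
      _ = 2 * D * Real.exp (H (Function.update s i false)) := by ring
  rw [pair_sum G i, abs_mul]
  have habs2 : |(1:ℝ)/2| = 1/2 := by norm_num
  rw [habs2]
  have step1 : |∑ s : Fin n → Bool,
      (G (Function.update s i true) + G (Function.update s i false))|
      ≤ ∑ s : Fin n → Bool, 2 * D * Real.exp (H (Function.update s i false)) :=
    le_trans (Finset.abs_sum_le_sum_abs _ _) (Finset.sum_le_sum fun s _ => pairbound s)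
  have step2 : ∑ s : Fin n → Bool, Real.exp (H (Function.update s i false))
      ≤ 2 * ∑ s : Fin n → Bool, Real.exp (H s) := by
    have hps := pair_sum (fun s => Real.exp (H s)) i
    have : ∑ s : Fin n → Bool,
        (Real.exp (H (Function.update s i true)) + Real.exp (H (Function.update s i false)))
        = 2 * ∑ s : Fin n → Bool, Real.exp (H s) := by
      rw [hps]; ring
    rw [← this]
    refine Finset.sum_le_sum fun s _ => ?_
    have := (Real.exp_pos (H (Function.update s i true))).le
    linarith
  calc (1:ℝ)/2 * |∑ s : Fin n → Bool,
        (G (Function.update s i true) + G (Function.update s i false))|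
      ≤ 1/2 * ∑ s : Fin n → Bool, 2 * D * Real.exp (H (Function.update s i false)) := by
        exact mul_le_mul_of_nonneg_left step1 (by norm_num)
    _ = D * ∑ s : Fin n → Bool, Real.exp (H (Function.update s i false)) := by
        rw [← Finset.mul_sum]; ring
    _ ≤ D * (2 * ∑ s : Fin n → Bool, Real.exp (H s)) :=
        mul_le_mul_of_nonneg_left step2 hD0
    _ = 2 * D * ∑ s : Fin n → Bool, Real.exp (H s) := by ring

theorem stmt13_aux {n d m : ℕ} (hm : 2 ≤ m) (w : Finset (Fin n) → ℝ)
    (x : Fin n → Fin d → ℝ) (θ₀ : Fin d → ℝ) (β₀ B M : ℝ)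
    (hcard : ∀ e : Finset (Fin n), w e ≠ 0 → 2 ≤ e.card ∧ e.card ≤ m)
    (hdeg : ∀ i : Fin n,
      ∑ e ∈ Finset.univ.filter (fun e : Finset (Fin n) => i ∈ e), |w e| ≤ 1)
    (hβ : |β₀| ≤ B)
    (hx : ∀ i, Real.sqrt (∑ k, x i k ^ 2) ≤ M)
    (Q : Fin d → (Fin n → Bool) → ℝ)
    (hQ : ∀ k s, Q k s = ∑ i,
      (conf s i - Real.tanh (β₀ * fder w i (conf s) + θ₀ ⬝ᵥ x i)) * x i k) :
    ∑ k : Fin d, expec w x θ₀ β₀ (fun s => (Q k s) ^ 2) ≤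
      4 * (1 + B) * M ^ 2 * ((m : ℝ) - 1) * d * n := by
  rcases Nat.eq_zero_or_pos n with hn | hn
  · subst hn
    have hQ0 : ∀ k s, Q k s = 0 := by intro k s; rw [hQ]; simp
    have hz : ∀ k : Fin d, expec w x θ₀ β₀ (fun s => (Q k s)^2) = 0 := by
      intro k; unfold expec; simp [hQ0]
    rw [Finset.sum_congr rfl fun k _ => hz k]
    simp
  · have hB : 0 ≤ B := le_trans (abs_nonneg _) hβ
    have hM : 0 ≤ M := le_trans (Real.sqrt_nonneg _) (hx ⟨0, hn⟩)
    have hm1 : (1:ℝ) ≤ (m:ℝ) - 1 := by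
      have : (2:ℝ) ≤ (m:ℝ) := by exact_mod_cast hm
      linarith
    have hD0 : 0 ≤ 2 * (1 + B) * M * ((m:ℝ) - 1) := by
      have h1 : (0:ℝ) ≤ 2 * (1 + B) * M := by positivity
      exact mul_nonneg h1 (by linarith)
    have hZ0 : 0 < ∑ s : Fin n → Bool, Real.exp (ham w x θ₀ β₀ s) :=
      Finset.sum_pos (fun s _ => Real.exp_pos _) Finset.univ_nonempty
    have key : ∀ k : Fin d, expec w x θ₀ β₀ (fun s => (Q k s)^2)
        ≤ 4 * (1 + B) * M^2 * ((m:ℝ) - 1) * n := by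
      intro k
      unfold expec
      rw [div_le_iff₀ hZ0]
      have expand : ∑ s : Fin n → Bool, Q k s ^ 2 * Real.exp (ham w x θ₀ β₀ s)
          = ∑ i : Fin n, x i k * ∑ s : Fin n → Bool,
              (conf s i - Real.tanh (β₀ * fder w i (conf s) + θ₀ ⬝ᵥ x i)) * Q k s
                * Real.exp (ham w x θ₀ β₀ s) := by
        have h1 : ∀ s : Fin n → Bool, Q k s ^ 2 * Real.exp (ham w x θ₀ β₀ s)
            = ∑ i : Fin n, x i k *
                ((conf s i - Real.tanh (β₀ * fder w i (conf s) + θ₀ ⬝ᵥ x i)) * Q k s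
                  * Real.exp (ham w x θ₀ β₀ s)) := by
          intro s
          rw [pow_two]
          nth_rewrite 1 [hQ]
          rw [Finset.sum_mul, Finset.sum_mul]
          exact Finset.sum_congr rfl fun i _ => by ring
        rw [Finset.sum_congr rfl fun s _ => h1 s, Finset.sum_comm]
        exact Finset.sum_congr rfl fun i _ => by rw [Finset.mul_sum]
      rw [expand]
      have bound_i : ∀ i : Fin n,
          x i k * (∑ s : Fin n → Bool,
              (conf s i - Real.tanh (β₀ * fder w i (conf s) + θ₀ ⬝ᵥ x i)) * Q k s
                * Real.exp (ham w x θ₀ β₀ s))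
          ≤ M * (2 * (2 * (1 + B) * M * ((m:ℝ) - 1))
              * ∑ s : Fin n → Bool, Real.exp (ham w x θ₀ β₀ s)) := by
        intro i
        have hN := Nbound w x θ₀ β₀ (2 * (1 + B) * M * ((m:ℝ) - 1)) (Q k) i hD0
          (fun s => Qdiff hm w x θ₀ β₀ B M hcard hdeg hβ hx hM Q hQ k i s)
        calc x i k * _ ≤ |x i k * _| := le_abs_self _
          _ = |x i k| * |_| := abs_mul _ _
          _ ≤ M * (2 * (2 * (1 + B) * M * ((m:ℝ) - 1))
              * ∑ s : Fin n → Bool, Real.exp (ham w x θ₀ β₀ s)) := by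
            refine mul_le_mul (xabs x M hx i k) hN (abs_nonneg _) hM
      calc ∑ i : Fin n, x i k * (∑ s : Fin n → Bool,
              (conf s i - Real.tanh (β₀ * fder w i (conf s) + θ₀ ⬝ᵥ x i)) * Q k s
                * Real.exp (ham w x θ₀ β₀ s))
          ≤ ∑ i : Fin n, M * (2 * (2 * (1 + B) * M * ((m:ℝ) - 1))
              * ∑ s : Fin n → Bool, Real.exp (ham w x θ₀ β₀ s)) :=
            Finset.sum_le_sum fun i _ => bound_i i
        _ = (n : ℝ) * (M * (2 * (2 * (1 + B) * M * ((m:ℝ) - 1))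
              * ∑ s : Fin n → Bool, Real.exp (ham w x θ₀ β₀ s))) := by
            rw [Finset.sum_const, Finset.card_univ, Fintype.card_fin, nsmul_eq_mul]
        _ = 4 * (1 + B) * M^2 * ((m:ℝ) - 1) * (n:ℝ)
              * ∑ s : Fin n → Bool, Real.exp (ham w x θ₀ β₀ s) := by ring
    calc ∑ k : Fin d, expec w x θ₀ β₀ (fun s => (Q k s)^2)
        ≤ ∑ k : Fin d, 4 * (1 + B) * M^2 * ((m:ℝ) - 1) * (n:ℝ) :=
          Finset.sum_le_sum fun k _ => key k
      _ = (d:ℝ) * (4 * (1 + B) * M^2 * ((m:ℝ) - 1) * (n:ℝ)) := by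
          rw [Finset.sum_const, Finset.card_univ, Fintype.card_fin, nsmul_eq_mul]
      _ = 4 * (1 + B) * M ^ 2 * ((m : ℝ) - 1) * d * n := by ring

theorem stmt13 {n d m : ℕ} (hm : 2 ≤ m) (w : Finset (Fin n) → ℝ)
    (x : Fin n → Fin d → ℝ) (θ₀ : Fin d → ℝ) (β₀ B M : ℝ)
    (hcard : ∀ e : Finset (Fin n), w e ≠ 0 → 2 ≤ e.card ∧ e.card ≤ m)
    (hdeg : ∀ i : Fin n,
      ∑ e ∈ Finset.univ.filter (fun e : Finset (Fin n) => i ∈ e), |w e| ≤ 1)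
    (hβ : |β₀| ≤ B)
    (hx : ∀ i, Real.sqrt (∑ k, x i k ^ 2) ≤ M)
    (Q : Fin d → (Fin n → Bool) → ℝ)
    (hQ : ∀ k s, Q k s = ∑ i,
      (conf s i - Real.tanh (β₀ * fder w i (conf s) + θ₀ ⬝ᵥ x i)) * x i k) :
    ∑ k : Fin d, expec w x θ₀ β₀ (fun s => (Q k s) ^ 2) ≤
      4 * (1 + B) * M ^ 2 * ((m : ℝ) - 1) * d * n :=
  stmt13_aux hm w x θ₀ β₀ B M hcard hdeg hβ hx Q hQ
end
end

section
/- Let g: {-1,+1}ⁿ → ℝ and let y be sampled from an arbitrary probability distribution μ on {-1,+1}ⁿ. Suppose for every j, whenever y and y' differ only in coordinate j we have |g(y) - g(y')| ≤ Lⱼ, and suppose g(y) = Σᵢ (yᵢ - mᵢ(y₋ᵢ)) aᵢ(y₋ᵢ) where mᵢ(y₋ᵢ) = E_μ[yᵢ | y₋ᵢ] and |aᵢ| ≤ K. Then E_μ[g(y)²] ≤ 2K Σᵢ Lᵢ. -/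
noncomputable section

open Function Finset

lemma upd_symm {n : ℕ} (i : Fin n) (b b' : Bool) (t : {j : Fin n // j ≠ i} → Bool) :
    Function.update ((Equiv.funSplitAt i Bool).symm (b, t)) i b'
      = (Equiv.funSplitAt i Bool).symm (b', t) := by
  funext j
  rcases eq_or_ne j i with rfl | h
  · simp [Equiv.funSplitAt, Equiv.piSplitAt]
  · simp [Equiv.funSplitAt, Equiv.piSplitAt, h, Function.update_of_ne h]

lemma keyzero {n : ℕ} (p : (Fin n → Bool) → ℝ) (mcond : Fin n → (Fin n → Bool) → ℝ)
    (hmloc : ∀ i s b, mcond i (Function.update s i b) = mcond i s)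
    (hmean : ∀ i s, ∑ b : Bool, p (Function.update s i b) * (sgn b - mcond i s) = 0)
    (i : Fin n) (h : (Fin n → Bool) → ℝ)
    (hloc : ∀ s b, h (Function.update s i b) = h s) :
    ∑ s : Fin n → Bool, p s * ((sgn (s i) - mcond i s) * h s) = 0 := by
  classical
  set e := Equiv.funSplitAt i Bool with he
  rw [← e.symm.sum_comp]
  rw [Fintype.sum_prod_type, Finset.sum_comm]
  apply Finset.sum_eq_zero
  intro t _
  set s₀ : Fin n → Bool := e.symm (false, t) with hs₀
  have hkey : ∀ b : Bool, e.symm (b, t) = Function.update s₀ i b := by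
    intro b; rw [hs₀, upd_symm]
  have hi : ∀ b : Bool, (e.symm (b, t)) i = b := by
    intro b; rw [hkey b, Function.update_self]
  calc ∑ b : Bool, p (e.symm (b, t)) * ((sgn ((e.symm (b, t)) i) - mcond i (e.symm (b, t))) * h (e.symm (b, t)))
      = ∑ b : Bool, h s₀ * (p (Function.update s₀ i b) * (sgn b - mcond i s₀)) := by
        apply Finset.sum_congr rfl
        intro b _
        rw [hkey b, Function.update_self, hmloc, hloc]
        ring
    _ = 0 := by rw [← Finset.mul_sum, hmean i s₀, mul_zero]

theorem stmt17 {n : ℕ} (p : (Fin n → Bool) → ℝ)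
    (hp0 : ∀ s, 0 ≤ p s) (hp1 : ∑ s : Fin n → Bool, p s = 1)
    (g : (Fin n → Bool) → ℝ) (L : Fin n → ℝ) (K : ℝ)
    (mcond : Fin n → (Fin n → Bool) → ℝ) (a : Fin n → (Fin n → Bool) → ℝ)
    -- `mcond i` and `a i` depend only on the coordinates other than `i`:
    (hmloc : ∀ i s b, mcond i (Function.update s i b) = mcond i s)
    (haloc : ∀ i s b, a i (Function.update s i b) = a i s)
    -- `mcond i` is the conditional mean of the `i`-th spin given the others:
    (hmean : ∀ i s, ∑ b : Bool, p (Function.update s i b) * (sgn b - mcond i s) = 0)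
    (haK : ∀ i s, |a i s| ≤ K)
    -- bounded differences:
    (hL : ∀ (j : Fin n) (s : Fin n → Bool) (b : Bool),
      |g s - g (Function.update s j b)| ≤ L j)
    (hg : ∀ s, g s = ∑ i, (sgn (s i) - mcond i s) * a i s) :
    ∑ s : Fin n → Bool, p s * (g s) ^ 2 ≤ 2 * K * ∑ i, L i := by
  classical
  -- expand g^2 using the representation
  have expand : ∀ s, p s * (g s) ^ 2
      = ∑ i, p s * ((sgn (s i) - mcond i s) * (a i s * g s)) := by
    intro s
    rw [pow_two]
    nth_rw 1 [hg s]
    rw [Finset.sum_mul, Finset.mul_sum]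
    exact Finset.sum_congr rfl (fun i _ => by ring)
  calc ∑ s : Fin n → Bool, p s * (g s) ^ 2
      = ∑ i, ∑ s : Fin n → Bool,
          p s * ((sgn (s i) - mcond i s) * (a i s * g s)) := by
        rw [← Finset.sum_comm]
        exact Finset.sum_congr rfl (fun s _ => expand s)
    _ = ∑ i, ∑ s : Fin n → Bool,
          p s * ((sgn (s i) - mcond i s)
            * (a i s * (g s - g (Function.update s i false)))) := by
        apply Finset.sum_congr rfl
        intro i _
        have hz := keyzero p mcond hmloc hmean i
          (fun s => a i s * g (Function.update s i false))
          (by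
            intro s b
            rw [haloc, Function.update_idem])
        have : ∑ s : Fin n → Bool,
            p s * ((sgn (s i) - mcond i s)
              * (a i s * (g s - g (Function.update s i false))))
          = ∑ s : Fin n → Bool, (p s * ((sgn (s i) - mcond i s) * (a i s * g s))
              - p s * ((sgn (s i) - mcond i s)
                  * (a i s * g (Function.update s i false)))) := by
          exact Finset.sum_congr rfl (fun s _ => by ring)
        rw [this, Finset.sum_sub_distrib, hz, sub_zero]
    _ ≤ ∑ i, ∑ s : Fin n → Bool, p s * (2 * (K * L i)) := by
        apply Finset.sum_le_sum
        intro i _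
        apply Finset.sum_le_sum
        intro s _
        have hKnn : 0 ≤ K := le_trans (abs_nonneg _) (haK i s)
        have hLnn : 0 ≤ L i := by
          have := hL i s (s i)
          rwa [Function.update_eq_self, sub_self, abs_zero] at this
        rcases eq_or_lt_of_le (hp0 s) with hps | hps
        · rw [← hps]; simp
        · -- bound |mcond i s| ≤ 1
          have hm : |mcond i s| ≤ 1 := by
            have heq := hmean i s
            rw [Fintype.sum_bool] at heq
            set pt := p (Function.update s i true) with hpt
            set pf := p (Function.update s i false) with hpf
            have hpt0 : 0 ≤ pt := hp0 _
            have hpf0 : 0 ≤ pf := hp0 _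
            have hsum : 0 < pt + pf := by
              rcases Bool.eq_false_or_eq_true (s i) with hb | hb
              · have : p (Function.update s i true) = p s := by
                  conv_lhs => rw [← hb]
                  rw [Function.update_eq_self]
                nlinarith [hps]
              · have : p (Function.update s i false) = p s := by
                  conv_lhs => rw [← hb]
                  rw [Function.update_eq_self]
                nlinarith [hps]
            simp only [sgn, if_true, if_false, Bool.false_eq_true] at heq
            rw [abs_le]
            constructor <;> nlinarith [heq, hpt0, hpf0, hsum]
          have hsg : |sgn (s i)| ≤ 1 := by
            rcases Bool.eq_false_or_eq_true (s i) with hb | hb <;> simp [sgn, hb]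
          have h2 : |sgn (s i) - mcond i s| ≤ 2 := by
            calc |sgn (s i) - mcond i s| ≤ |sgn (s i)| + |mcond i s| := abs_sub _ _
              _ ≤ 2 := by linarith
          calc p s * ((sgn (s i) - mcond i s)
                * (a i s * (g s - g (Function.update s i false))))
              ≤ |p s * ((sgn (s i) - mcond i s)
                * (a i s * (g s - g (Function.update s i false))))| := le_abs_self _
            _ = p s * (|sgn (s i) - mcond i s|
                * (|a i s| * |g s - g (Function.update s i false)|)) := by
                rw [abs_mul, abs_mul, abs_mul, abs_of_nonneg (hp0 s)]
            _ ≤ p s * (2 * (K * L i)) := by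
                gcongr <;>
                  first
                    | exact abs_nonneg _
                    | exact h2
                    | exact haK i s
                    | exact hL i s false

    _ = 2 * K * ∑ i, L i := by
        rw [Finset.mul_sum]
        apply Finset.sum_congr rfl
        intro i _
        rw [← Finset.sum_mul, hp1, one_mul]
        ring
end
end
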